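/- arXiv:0707.3860 — 10 statements merged into one kernel-verified Lean document; each statement's English description precedes it below -/
import Mathlib

section
/- If $(X_n)_{n\in\mathbf{Z}}$ is a constructive Markov chain with $X_{n+1}=f_n(X_n,V_{n+1})$ where each $V_{n+1}$ is independent of $((X_k,V_k))_{k\le n}$, then the asymptotic sigma-fields coincide: $\bigcap_{n} \mathcal{F}_n^{(X,V)} = \bigcap_n \mathcal{F}_n^X$ (up to null sets). -/
open MeasureTheory ProbabilityTheory
open scoped symmDiff


open Filter
open scoped ENNReal


namespace StmtAux

variable {Ω : Type*} {m0 : MeasurableSpace Ω} {μ : Measure Ω} [IsProbabilityMeasure μ]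

lemma indep_mono {m₁ m₂ m₁' m₂' : MeasurableSpace Ω} (h : Indep m₁ m₂ μ)
    (h1 : m₁' ≤ m₁) (h2 : m₂' ≤ m₂) : Indep m₁' m₂' μ := by
  rw [Indep_iff] at h ⊢
  exact fun t1 t2 ht1 ht2 => h t1 t2 (h1 _ ht1) (h2 _ ht2)

lemma indep_bot_left (m' : MeasurableSpace Ω) : Indep (⊥ : MeasurableSpace Ω) m' μ := by
  rw [Indep_iff]
  intro t1 t2 ht1 _
  rcases MeasurableSpace.measurableSet_bot_iff.1 ht1 with rfl | rfl
  · simp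
  · simp

lemma sup_eq_generateFrom_inter (m₁ m₂ : MeasurableSpace Ω) :
    m₁ ⊔ m₂ = MeasurableSpace.generateFrom
      {s : Set Ω | ∃ a b, MeasurableSet[m₁] a ∧ MeasurableSet[m₂] b ∧ s = a ∩ b} := by
  apply le_antisymm
  · refine sup_le ?_ ?_
    · exact fun s hs => MeasurableSpace.measurableSet_generateFrom
        ⟨s, Set.univ, hs, MeasurableSet.univ, (Set.inter_univ s).symm⟩
    · exact fun s hs => MeasurableSpace.measurableSet_generateFrom
        ⟨Set.univ, s, MeasurableSet.univ, hs, (Set.univ_inter s).symm⟩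
  · refine MeasurableSpace.generateFrom_le ?_
    rintro s ⟨a, b, ha, hb, rfl⟩
    exact MeasurableSet.inter ((le_sup_left : m₁ ≤ m₁ ⊔ m₂) _ ha)
      ((le_sup_right : m₂ ≤ m₁ ⊔ m₂) _ hb)

lemma isPiSystem_inter (m₁ m₂ : MeasurableSpace Ω) :
    IsPiSystem {s : Set Ω | ∃ a b, MeasurableSet[m₁] a ∧ MeasurableSet[m₂] b ∧ s = a ∩ b} := by
  rintro s ⟨a, b, ha, hb, rfl⟩ t ⟨a', b', ha', hb', rfl⟩ -
  exact ⟨a ∩ a', b ∩ b', ha.inter ha', hb.inter hb', by ext x; simp; tauto⟩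

lemma indep_sup_of_indep {m₁ m₂ m₃ : MeasurableSpace Ω} (h1 : m₁ ≤ m0) (h2 : m₂ ≤ m0)
    (h3 : m₃ ≤ m0) (h23 : Indep m₂ (m₁ ⊔ m₃) μ) (h13 : Indep m₁ m₃ μ) :
    Indep (m₁ ⊔ m₂) m₃ μ := by
  have h12 : Indep m₁ m₂ μ := (indep_mono h23 le_rfl le_sup_left).symm
  refine IndepSets.indep (sup_le h1 h2) h3 (isPiSystem_inter m₁ m₂)
    (@MeasurableSpace.isPiSystem_measurableSet Ω m₃) (sup_eq_generateFrom_inter m₁ m₂)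
    (@MeasurableSpace.generateFrom_measurableSet Ω m₃).symm ?_
  rw [IndepSets_iff]
  rintro s t ⟨a, b, ha, hb, rfl⟩ ht
  have hset : (a ∩ b) ∩ t = b ∩ (a ∩ t) := by ext x; simp; tauto
  have e1 : μ (b ∩ (a ∩ t)) = μ b * μ (a ∩ t) :=
    (Indep_iff _ _ _).1 h23 b (a ∩ t) hb
      (MeasurableSet.inter ((le_sup_left : m₁ ≤ m₁ ⊔ m₃) _ ha)
        ((le_sup_right : m₃ ≤ m₁ ⊔ m₃) _ ht))
  have e2 : μ (a ∩ t) = μ a * μ t := (Indep_iff _ _ _).1 h13 a t ha ht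
  have e3 : μ (a ∩ b) = μ a * μ b := (Indep_iff _ _ _).1 h12 a b ha hb
  rw [hset, e1, e2, e3]
  ring

end StmtAux

namespace StmtAux

lemma condexp_sup_indep {Ω : Type*} {mA m₁ m₂ : MeasurableSpace Ω} {m0 : MeasurableSpace Ω}
    {μ : Measure Ω} [IsProbabilityMeasure μ] (h1A : m₁ ≤ mA) (hA : mA ≤ m0)
    (h2 : m₂ ≤ m0) {A : Set Ω} (hAm : MeasurableSet[mA] A) (hind : Indep m₂ mA μ) :
    μ[A.indicator (fun _ => (1:ℝ)) | m₁ ⊔ m₂] =ᵐ[μ] μ[A.indicator (fun _ => (1:ℝ)) | m₁] := by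
  have h1 : m₁ ≤ m0 := h1A.trans hA
  have hsup : m₁ ⊔ m₂ ≤ m0 := sup_le h1 h2
  set F : Ω → ℝ := A.indicator (fun _ => (1:ℝ)) with hF
  have hAm0 : MeasurableSet[m0] A := hA _ hAm
  have hFint : Integrable F μ := (integrable_const (1:ℝ)).indicator hAm0
  set g : Ω → ℝ := μ[F | m₁] with hg
  have hgsm : StronglyMeasurable[m₁] g := stronglyMeasurable_condExp
  have hind' : ∀ (b c : Set Ω), MeasurableSet[m₂] b → MeasurableSet[mA] c →
      μ (c ∩ b) = μ c * μ b := by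
    intro b c hb hc
    rw [Set.inter_comm, (Indep_iff _ _ _).1 hind b c hb hc, mul_comm]
  have hFset : ∀ s : Set Ω, MeasurableSet[m0] s → ∫ x in s, F x ∂μ = (μ (s ∩ A)).toReal := by
    intro s hs
    rw [hF, setIntegral_indicator hAm0]
    simp [setIntegral_const, Measure.real]
  have key0 := @MeasurableSpace.induction_on_inter Ω (m₁ ⊔ m₂)
    (fun s _ => ∫ x in s, g x ∂μ = ∫ x in s, F x ∂μ) _
    (sup_eq_generateFrom_inter m₁ m₂) (isPiSystem_inter m₁ m₂) (by simp) ?basic ?compl ?union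
  case basic =>
    rintro s ⟨a, b, ha, hb, rfl⟩
    have ham0 : MeasurableSet[m0] a := h1 _ ha
    have hbm0 : MeasurableSet[m0] b := h2 _ hb
    have hXmeas : Measurable[m₂] (b.indicator (fun _ => (1:ℝ))) :=
      measurable_const.indicator hb
    have hYmeas : Measurable[mA] (a.indicator g) :=
      ((hgsm.measurable).indicator ha).mono h1A le_rfl
    have hIndepFun : IndepFun (b.indicator (fun _ => (1:ℝ))) (a.indicator g) μ := by
      rw [IndepFun_iff_Indep]
      exact indep_mono hind hXmeas.comap_le hYmeas.comap_le
    have hXint : Integrable (b.indicator (fun _ => (1:ℝ))) μ :=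
      (integrable_const (1:ℝ)).indicator hbm0
    have hYint : Integrable (a.indicator g) μ := integrable_condExp.indicator (h1 _ ha)
    have hmul : (b.indicator (fun _ => (1:ℝ))) * (a.indicator g) = (a ∩ b).indicator g := by
      ext x
      by_cases hx1 : x ∈ a <;> by_cases hx2 : x ∈ b <;>
        simp [Set.indicator, hx1, hx2]
    have e1 : ∫ x in a ∩ b, g x ∂μ
        = (∫ x, b.indicator (fun _ => (1:ℝ)) x ∂μ) * ∫ x, a.indicator g x ∂μ := by
      rw [← integral_indicator (ham0.inter hbm0), ← hmul,
        IndepFun.integral_mul_eq_mul_integral hIndepFun hXint.aestronglyMeasurable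
          hYint.aestronglyMeasurable]
    have e2 : ∫ x, b.indicator (fun _ => (1:ℝ)) x ∂μ = (μ b).toReal := by
      rw [integral_indicator hbm0]; simp [setIntegral_const, Measure.real]
    have e3 : ∫ x, a.indicator g x ∂μ = (μ (a ∩ A)).toReal := by
      rw [integral_indicator ham0, hg, setIntegral_condExp h1 hFint ha, hFset a ham0]
    have e4 : ∫ x in a ∩ b, F x ∂μ = (μ ((a ∩ b) ∩ A)).toReal :=
      hFset _ (ham0.inter hbm0)
    have hset : (a ∩ b) ∩ A = (a ∩ A) ∩ b := by ext x; simp; tauto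
    rw [e1, e2, e3, e4, hset, hind' b (a ∩ A) hb (MeasurableSet.inter (h1A _ ha) hAm),
      ENNReal.toReal_mul, mul_comm]
  case compl =>
    intro t ht hC
    have htm0 : MeasurableSet[m0] t := hsup _ ht
    have l1 := integral_add_compl htm0 (integrable_condExp : Integrable g μ)
    have l2 := integral_add_compl htm0 hFint
    have l3 : ∫ x, g x ∂μ = ∫ x, F x ∂μ := integral_condExp h1
    linarith
  case union =>
    intro s hdisj hsm hC
    have hsm0 : ∀ i, MeasurableSet[m0] (s i) := fun i => hsup _ (hsm i)
    rw [integral_iUnion hsm0 hdisj integrable_condExp.integrableOn,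
      integral_iUnion hsm0 hdisj hFint.integrableOn]
    exact tsum_congr hC
  exact (ae_eq_condExp_of_forall_setIntegral_eq hsup hFint
    (fun s _ _ => integrable_condExp.integrableOn)
    (fun s hs _ => key0 _ hs)
    ⟨_, stronglyMeasurable_condExp.mono le_sup_left, EventuallyEq.rfl⟩).symm

end StmtAux

/-- for an (inhomogeneous) constructive Markov chain
`X_{n+1} = f_n (X_n, V_{n+1})` indexed by `ℤ`, with each `V_{n+1}` independent of
`((X_k, V_k))_{k ≤ n}`, the asymptotic σ-fields coincide up to null sets:
`⋂ n 𝓕_n^{(X,V)} = ⋂ n 𝓕_n^X` (the inclusion `⊇` being trivial, every event of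
`⋂ n 𝓕_n^{(X,V)}` coincides a.s. with an event of `⋂ n 𝓕_n^X`). -/
theorem stmt_0 {Ω : Type*} [MeasurableSpace Ω] (P : Measure Ω) [IsProbabilityMeasure P]
    (E : ℤ → Type*) (mE : ∀ n, MeasurableSpace (E n))
    (G : ℤ → Type*) (mG : ∀ n, MeasurableSpace (G n))
    (X : ∀ n : ℤ, Ω → E n) (V : ∀ n : ℤ, Ω → G n)
    (hX : ∀ n, Measurable (X n)) (hV : ∀ n, Measurable (V n))
    (f : ∀ n : ℤ, E n × G (n + 1) → E (n + 1)) (hf : ∀ n, Measurable (f n))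
    (hrec : ∀ n : ℤ, ∀ ω, X (n + 1) ω = f n (X n ω, V (n + 1) ω))
    (hindep : ∀ n : ℤ,
      Indep (MeasurableSpace.comap (V (n + 1)) (mG (n + 1)))
        (⨆ k : ℤ, ⨆ _ : k ≤ n,
          MeasurableSpace.comap (X k) (mE k) ⊔ MeasurableSpace.comap (V k) (mG k)) P) :
    (⨅ n : ℤ, ⨆ k : ℤ, ⨆ _ : k ≤ n, MeasurableSpace.comap (X k) (mE k)) ≤
      (⨅ n : ℤ, ⨆ k : ℤ, ⨆ _ : k ≤ n,
        MeasurableSpace.comap (X k) (mE k) ⊔ MeasurableSpace.comap (V k) (mG k)) ∧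
    ∀ A : Set Ω,
      MeasurableSet[⨅ n : ℤ, ⨆ k : ℤ, ⨆ _ : k ≤ n,
        MeasurableSpace.comap (X k) (mE k) ⊔ MeasurableSpace.comap (V k) (mG k)] A →
      ∃ B : Set Ω,
        MeasurableSet[⨅ n : ℤ, ⨆ k : ℤ, ⨆ _ : k ≤ n,
          MeasurableSpace.comap (X k) (mE k)] B ∧ P (A ∆ B) = 0 := by
  classical
  let FX : ℤ → MeasurableSpace Ω := fun n => ⨆ k : ℤ, ⨆ _ : k ≤ n, (mE k).comap (X k)
  let FXV : ℤ → MeasurableSpace Ω :=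
    fun n => ⨆ k : ℤ, ⨆ _ : k ≤ n, (mE k).comap (X k) ⊔ (mG k).comap (V k)
  have hFX_le_FXV : ∀ n, FX n ≤ FXV n := fun n =>
    iSup_mono fun k => iSup_mono fun _ => le_sup_left
  refine ⟨iInf_mono hFX_le_FXV, ?_⟩
  intro A hA
  have hAmem : ∀ n, MeasurableSet[FXV n] A := fun n => (iInf_le FXV n) _ hA
  have hFXle : ∀ n, FX n ≤ (inferInstance : MeasurableSpace Ω) :=
    fun n => iSup₂_le fun k _ => (hX k).comap_le
  have hFXVle : ∀ n, FXV n ≤ (inferInstance : MeasurableSpace Ω) :=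
    fun n => iSup₂_le fun k _ => sup_le (hX k).comap_le (hV k).comap_le
  have hFXmono : Monotone FX := fun a b hab =>
    iSup₂_le fun k hk => le_iSup₂_of_le k (hk.trans hab) le_rfl
  have hFXVmono : Monotone FXV := fun a b hab =>
    iSup₂_le fun k hk => le_iSup₂_of_le k (hk.trans hab) le_rfl
  have hXFX : ∀ {m n : ℤ}, m ≤ n → (mE m).comap (X m) ≤ FX n :=
    fun {m n} hmn => le_iSup₂_of_le m hmn le_rfl
  have hXVFXV : ∀ {k n : ℤ}, k ≤ n → (mE k).comap (X k) ⊔ (mG k).comap (V k) ≤ FXV n :=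
    fun {k n} h => le_iSup₂_of_le k h le_rfl
  let W : ℤ → MeasurableSpace Ω := fun n => ⨆ k : ℤ, ⨆ _ : n < k, (mG k).comap (V k)
  have hVW : ∀ {k n : ℤ}, n < k → (mG k).comap (V k) ≤ W n :=
    fun {k n} hnk => le_iSup₂_of_le k hnk le_rfl
  let H : ℤ → MeasurableSpace Ω := fun n => FX n ⊔ W n
  have hWle : ∀ n, W n ≤ (inferInstance : MeasurableSpace Ω) :=
    fun n => iSup₂_le fun k _ => (hV k).comap_le
  have hHle : ∀ n, H n ≤ (inferInstance : MeasurableSpace Ω) :=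
    fun n => sup_le (hFXle n) (hWle n)
  -- every X m is H n-measurable
  have hXH : ∀ n m : ℤ, (mE m).comap (X m) ≤ H n := by
    intro n m
    rcases le_or_gt m n with hmn | hnm
    · exact le_trans (hXFX hmn) (le_sup_left : FX n ≤ H n)
    · have key : ∀ m : ℤ, n ≤ m → (mE m).comap (X m) ≤ H n := by
        refine fun m hm => Int.le_induction (motive := fun m _ => (mE m).comap (X m) ≤ H n) ?_ ?_ m hm
        · exact le_trans (hXFX le_rfl) (le_sup_left : FX n ≤ H n)
        · intro m hm ih
          have hVWH : (mG (m + 1)).comap (V (m + 1)) ≤ H n :=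
            le_trans (hVW (by omega)) (le_sup_right : W n ≤ H n)
          have hmeas : @Measurable Ω (E (m + 1))
              ((mE m).comap (X m) ⊔ (mG (m + 1)).comap (V (m + 1))) (mE (m + 1)) (X (m + 1)) := by
            have hXe : X (m + 1) = (f m) ∘ (fun ω => (X m ω, V (m + 1) ω)) := funext (hrec m)
            rw [hXe]
            exact (hf m).comp ((measurable_iff_comap_le.2 le_sup_left).prodMk
              (measurable_iff_comap_le.2 le_sup_right))
          exact le_trans (measurable_iff_comap_le.1 hmeas) (sup_le ih hVWH)
      exact key m hnm.le
  have hH_anti : Antitone H := by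
    intro a b hab
    exact sup_le (iSup₂_le fun k _ => hXH a k)
      (iSup₂_le fun k hk =>
        le_trans (hVW (lt_of_le_of_lt hab hk)) (le_sup_right : W a ≤ H a))
  -- independence of W n and FXV n
  have hWindep : ∀ n : ℤ, Indep (W n) (FXV n) P := by
    intro n
    let K : ℕ → MeasurableSpace Ω :=
      fun m => ⨆ k : ℤ, ⨆ _ : n < k ∧ k ≤ n + m, (mG k).comap (V k)
    have hKle : ∀ m, K m ≤ (inferInstance : MeasurableSpace Ω) :=
      fun m => iSup₂_le fun k _ => (hV k).comap_le
    have hVK : ∀ {k : ℤ} {m : ℕ}, n < k → k ≤ n + m → (mG k).comap (V k) ≤ K m :=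
      fun {k m} h1 h2 => le_iSup₂_of_le k ⟨h1, h2⟩ le_rfl
    have hKmono : Monotone K := fun a b hab => iSup₂_le fun k hk =>
      hVK hk.1 (by have := hk.2; omega)
    have hKindep : ∀ m, Indep (K m) (FXV n) P := by
      intro m
      induction m with
      | zero =>
        have hbot : K 0 ≤ (⊥ : MeasurableSpace Ω) :=
          iSup₂_le fun k hk => absurd hk (by omega)
        exact StmtAux.indep_mono (StmtAux.indep_bot_left (FXV n)) hbot le_rfl
      | succ m ih =>
        have hsplit : K (m + 1) ≤ K m ⊔ (mG (n + m + 1)).comap (V (n + m + 1)) := by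
          refine iSup₂_le fun k hk => ?_
          rcases eq_or_lt_of_le hk.2 with heq | hlt
          · have hkk : k = n + m + 1 := by omega
            subst hkk
            exact le_sup_right
          · exact le_trans (hVK hk.1 (by omega)) le_sup_left
        have hgrp : Indep (K m ⊔ (mG (n + m + 1)).comap (V (n + m + 1))) (FXV n) P := by
          refine StmtAux.indep_sup_of_indep (hKle m) (hV (n + m + 1)).comap_le (hFXVle n) ?_ ih
          have h2 : Indep ((mG (n + m + 1)).comap (V (n + m + 1))) (FXV (n + m)) P :=
            hindep (n + m)
          refine StmtAux.indep_mono h2 le_rfl (sup_le ?_ (hFXVmono (by omega)))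
          exact iSup₂_le fun k hk =>
            le_trans (le_sup_right.trans (hXVFXV (show k ≤ n + (m:ℤ) by omega))) le_rfl
        exact StmtAux.indep_mono hgrp hsplit le_rfl
    have hWK : W n = ⨆ m : ℕ, K m := by
      apply le_antisymm
      · refine iSup₂_le fun k hk => ?_
        refine le_iSup_of_le (k - n).toNat ?_
        exact hVK hk (by omega)
      · exact iSup_le fun m => iSup₂_le fun k hk => hVW hk.1
    rw [hWK]
    exact indep_iSup_of_monotone hKindep hKle (hFXVle n) hKmono
  -- conditional expectations
  have hAmeas0 : MeasurableSet A := hFXVle 0 _ (hAmem 0)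
  let F : Ω → ℝ := A.indicator (fun _ => (1 : ℝ))
  have hFint : Integrable F P := (integrable_const (1 : ℝ)).indicator hAmeas0
  have hcond : ∀ n : ℤ, P[F | H n] =ᵐ[P] P[F | FX n] := fun n =>
    StmtAux.condexp_sup_indep (hFX_le_FXV n) (hFXVle n) (hWle n) (hAmem n) (hWindep n)
  -- Lévy upward along the filtration k ↦ H (-k)
  let ℱ : Filtration ℕ (inferInstance : MeasurableSpace Ω) :=
    { seq := fun k => H (-(k : ℤ))
      mono' := fun i j hij => hH_anti (by exact_mod_cast neg_le_neg (Int.ofNat_le.2 hij))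
      le' := fun k => hHle _ }
  have hsupF : FXV 0 ≤ ⨆ k, (ℱ k : MeasurableSpace Ω) := by
    refine iSup₂_le fun j hj => sup_le ?_ ?_
    · exact le_trans (hXH (-((0 : ℕ) : ℤ)) j) (le_iSup (fun k => (ℱ k : MeasurableSpace Ω)) 0)
    · have h1 : (mG j).comap (V j) ≤ H (j - 1) :=
        le_trans (le_iSup₂_of_le j (by omega) le_rfl) (le_sup_right : W (j - 1) ≤ H (j - 1))
      have h2 : H (j - 1) ≤ H (-(((1 - j).toNat : ℕ) : ℤ)) := hH_anti (by omega)
      exact le_trans h1 (le_trans h2 (le_iSup (fun k => (ℱ k : MeasurableSpace Ω)) (1 - j).toNat))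
  have hAsup : MeasurableSet[⨆ k, (ℱ k : MeasurableSpace Ω)] A := hsupF _ (hAmem 0)
  have hFsm : StronglyMeasurable[⨆ k, (ℱ k : MeasurableSpace Ω)] F :=
    stronglyMeasurable_const.indicator hAsup
  have hlevy : ∀ᵐ ω ∂P, Filter.Tendsto (fun k => (P[F | ℱ k]) ω) Filter.atTop (nhds (F ω)) :=
    hFint.tendsto_ae_condExp hFsm
  let g : ℕ → Ω → ℝ := fun k => P[F | FX (-(k : ℤ))]
  have hcond' : ∀ k : ℕ, P[F | (ℱ k : MeasurableSpace Ω)] =ᵐ[P] g k := fun k => hcond (-(k : ℤ))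
  have hae : ∀ᵐ ω ∂P, Filter.Tendsto (fun k => g k ω) Filter.atTop (nhds (F ω)) := by
    have h2 : ∀ᵐ ω ∂P, ∀ k : ℕ, (P[F | (ℱ k : MeasurableSpace Ω)]) ω = g k ω :=
      ae_all_iff.2 fun k => hcond' k
    filter_upwards [hlevy, h2] with ω h1 h2
    exact Filter.Tendsto.congr (fun k => h2 k) h1
  -- the limsup function
  let u : Ω → ℝ≥0∞ := fun ω => Filter.limsup (fun k : ℕ => ENNReal.ofReal (g k ω)) Filter.atTop
  have humeas : ∀ n : ℤ, Measurable[FX n] u := by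
    intro n
    have hshift : u = fun ω =>
        Filter.limsup (fun k : ℕ => ENNReal.ofReal (g (k + (-n).toNat) ω)) Filter.atTop := by
      funext ω
      exact (Filter.limsup_nat_add (fun k => ENNReal.ofReal (g k ω)) (-n).toNat).symm
    rw [hshift]
    refine Measurable.limsup fun k => ?_
    have hle : FX (-(((k + (-n).toNat) : ℕ) : ℤ)) ≤ FX n := hFXmono (by omega)
    exact ((stronglyMeasurable_condExp.mono hle).measurable).ennreal_ofReal
  have hu_inf : Measurable[⨅ n : ℤ, FX n] u := by
    intro s hs
    exact MeasurableSpace.measurableSet_iInf.2 fun n => humeas n hs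
  refine ⟨u ⁻¹' {1}, hu_inf (measurableSet_singleton 1), ?_⟩
  refine measure_mono_null ?_ (ae_iff.1 hae)
  intro ω hω
  simp only [Set.mem_setOf_eq]
  intro htend
  have hlim : u ω = ENNReal.ofReal (F ω) :=
    ((ENNReal.continuous_ofReal.tendsto (F ω)).comp htend).limsup_eq
  rcases Set.mem_symmDiff.1 hω with ⟨hA1, hB1⟩ | ⟨hB1, hA1⟩
  · refine hB1 ?_
    have hF1 : F ω = 1 := Set.indicator_of_mem hA1 _
    simp only [Set.mem_preimage, Set.mem_singleton_iff, hlim, hF1, ENNReal.ofReal_one]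
  · have hF0 : F ω = 0 := Set.indicator_of_notMem hA1 _
    rw [Set.mem_preimage, Set.mem_singleton_iff] at hB1
    exact one_ne_zero (by rw [← hB1, hlim, hF0, ENNReal.ofReal_zero])
end

section
/- If $(X_n)_{n\in\mathbf{Z}}$ is a stationary, irreducible, aperiodic Markov chain on a countable state space, then its asymptotic (tail at $-\infty$) sigma-field $\bigcap_{n\in\mathbf{Z}}\sigma(X_k : k\le n)$ is trivial, i.e., every event in it has probability 0 or 1. -/
open MeasureTheory ProbabilityTheory Filter
open scoped ENNReal Topology

/-- Iterates `δ_x Kⁿ` of a transition kernel `K` on a countable state space. -/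
noncomputable def kernelIter {E : Type*} [MeasurableSpace E]
    (K : E → Measure E) (x : E) : ℕ → Measure E
  | 0 => Measure.dirac x
  | n + 1 => (kernelIter K x n).bind K

section Aux

variable {E : Type*} [MeasurableSpace E] [MeasurableSingletonClass E] [Countable E]

lemma measE {β : Type*} [MeasurableSpace β] (f : E → β) : Measurable f :=
  measurable_of_countable f

lemma measSetE (S : Set E) : MeasurableSet S := (Set.to_countable S).measurableSet

lemma tsum_meas_singleton (μ : Measure E) : ∑' y : E, μ {y} = μ Set.univ := by
  have h := lintegral_countable' (fun _ : E => (1 : ℝ≥0∞)) (μ := μ)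
  simpa using h.symm

lemma kernelIter_prob (K : E → Measure E) (hK : ∀ x, IsProbabilityMeasure (K x)) (x : E) :
    ∀ n, IsProbabilityMeasure (kernelIter K x n) := by
  intro n
  induction n with
  | zero => exact (by infer_instance : IsProbabilityMeasure (Measure.dirac x))
  | succ n ih =>
    constructor
    rw [show kernelIter K x (n+1) = (kernelIter K x n).bind K from rfl,
      Measure.bind_apply MeasurableSet.univ (measE K).aemeasurable]
    have h1 : ∀ z : E, K z Set.univ = 1 := fun z => (hK z).measure_univ
    simp [h1]

/-- Action of the kernel on `ℝ≥0∞`-valued functions. -/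
noncomputable def Kop (K : E → Measure E) (g : E → ℝ≥0∞) (x : E) : ℝ≥0∞ :=
  ∫⁻ y, g y ∂(K x)

lemma Kop_eq_tsum (K : E → Measure E) (g : E → ℝ≥0∞) (x : E) :
    Kop K g x = ∑' y : E, g y * K x {y} := lintegral_countable' g (μ := K x)

lemma Kop_le_one {K : E → Measure E} (hK : ∀ x, IsProbabilityMeasure (K x))
    {g : E → ℝ≥0∞} (hg : ∀ y, g y ≤ 1) (x : E) : Kop K g x ≤ 1 := by
  calc Kop K g x ≤ ∫⁻ _, 1 ∂(K x) := lintegral_mono hg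
  _ = 1 := by simp [(hK x).measure_univ]

lemma Kop_iter (K : E → Measure E) :
    ∀ (N : ℕ) (g : E → ℝ≥0∞) (x : E), (Kop K)^[N] g x = ∫⁻ y, g y ∂(kernelIter K x N) := by
  intro N
  induction N with
  | zero =>
    intro g x
    simp [show kernelIter K x 0 = Measure.dirac x from rfl, lintegral_dirac' x (measE g)]
  | succ N ih =>
    intro g x
    rw [Function.iterate_succ_apply, ih (Kop K g) x,
      show kernelIter K x (N+1) = (kernelIter K x N).bind K from rfl,
      Measure.lintegral_bind (measE K).aemeasurable (measE g).aemeasurable]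
    rfl

lemma Kop_iter_le_one {K : E → Measure E} (hK : ∀ x, IsProbabilityMeasure (K x))
    {g : E → ℝ≥0∞} (hg : ∀ y, g y ≤ 1) (N : ℕ) (x : E) : (Kop K)^[N] g x ≤ 1 := by
  rw [Kop_iter]
  haveI := kernelIter_prob K hK x N
  calc ∫⁻ y, g y ∂(kernelIter K x N) ≤ ∫⁻ _, 1 ∂(kernelIter K x N) := lintegral_mono hg
  _ = 1 := by simp

lemma tsum_toReal_singleton (μ : Measure E) [IsProbabilityMeasure μ] :
    ∑' y : E, (μ {y}).toReal = 1 := by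
  rw [← ENNReal.tsum_toReal_eq (fun y => measure_ne_top μ _), tsum_meas_singleton]
  simp

lemma summable_toReal_singleton (μ : Measure E) [IsProbabilityMeasure μ] :
    Summable (fun y : E => (μ {y}).toReal) := by
  refine ENNReal.summable_toReal ?_
  rw [tsum_meas_singleton]; simp

lemma tv_nonneg (μ ν : Measure E) :
    0 ≤ ∑' y : E, |(μ {y}).toReal - (ν {y}).toReal| :=
  tsum_nonneg fun y => abs_nonneg _

lemma tv_summable (μ ν : Measure E) [IsProbabilityMeasure μ] [IsProbabilityMeasure ν] :
    Summable (fun y : E => |(μ {y}).toReal - (ν {y}).toReal|) := by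
  refine Summable.of_nonneg_of_le (fun y => abs_nonneg _) (fun y => ?_)
    ((summable_toReal_singleton μ).add (summable_toReal_singleton ν))
  refine (abs_sub _ _).trans ?_
  simp [abs_of_nonneg ENNReal.toReal_nonneg]

lemma tv_le_two (μ ν : Measure E) [IsProbabilityMeasure μ] [IsProbabilityMeasure ν] :
    ∑' y : E, |(μ {y}).toReal - (ν {y}).toReal| ≤ 2 := by
  have h := Summable.tsum_le_tsum (f := fun y : E => |(μ {y}).toReal - (ν {y}).toReal|)
    (g := fun y => (μ {y}).toReal + (ν {y}).toReal)
    (fun y => by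
      refine (abs_sub _ _).trans ?_
      simp [abs_of_nonneg ENNReal.toReal_nonneg])
    (tv_summable μ ν) ((summable_toReal_singleton μ).add (summable_toReal_singleton ν))
  rw [Summable.tsum_add (summable_toReal_singleton μ) (summable_toReal_singleton ν),
    tsum_toReal_singleton, tsum_toReal_singleton] at h
  linarith

lemma lintegral_toReal_eq (μ : Measure E) [IsProbabilityMeasure μ]
    {g : E → ℝ≥0∞} (hg : ∀ y, g y ≤ 1) :
    (∫⁻ y, g y ∂μ).toReal = ∑' y : E, (g y).toReal * (μ {y}).toReal := by
  rw [lintegral_countable' g (μ := μ), ENNReal.tsum_toReal_eq]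
  · simp_rw [ENNReal.toReal_mul]
  · intro y
    exact ENNReal.mul_ne_top (lt_of_le_of_lt (hg y) ENNReal.one_lt_top).ne (measure_ne_top μ _)

lemma summable_g_singleton (μ : Measure E) [IsProbabilityMeasure μ]
    {g : E → ℝ≥0∞} (hg : ∀ y, g y ≤ 1) :
    Summable (fun y : E => (g y).toReal * (μ {y}).toReal) := by
  refine Summable.of_nonneg_of_le (fun y => by positivity) (fun y => ?_)
    (summable_toReal_singleton μ)
  have h1 : (g y).toReal ≤ 1 := by
    simpa using ENNReal.toReal_mono (by simp) (hg y)
  nlinarith [ENNReal.toReal_nonneg (a := μ {y})]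

/-- Pointwise total-variation bound. -/
lemma tv_bound (μ ν : Measure E) [IsProbabilityMeasure μ] [IsProbabilityMeasure ν]
    {g : E → ℝ≥0∞} (hg : ∀ y, g y ≤ 1) :
    |(∫⁻ y, g y ∂μ).toReal - (∫⁻ y, g y ∂ν).toReal|
      ≤ ∑' y : E, |(μ {y}).toReal - (ν {y}).toReal| := by
  rw [lintegral_toReal_eq μ hg, lintegral_toReal_eq ν hg,
    ← Summable.tsum_sub (summable_g_singleton μ hg) (summable_g_singleton ν hg)]
  have hsum : Summable (fun y : E =>
      (g y).toReal * (μ {y}).toReal - (g y).toReal * (ν {y}).toReal) :=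
    (summable_g_singleton μ hg).sub (summable_g_singleton ν hg)
  calc |∑' y : E, ((g y).toReal * (μ {y}).toReal - (g y).toReal * (ν {y}).toReal)|
      ≤ ∑' y : E, |(g y).toReal * (μ {y}).toReal - (g y).toReal * (ν {y}).toReal| := by
        have := norm_tsum_le_tsum_norm (f := fun y : E =>
          (g y).toReal * (μ {y}).toReal - (g y).toReal * (ν {y}).toReal) (hsum.abs)
        simpa using this
    _ ≤ ∑' y : E, |(μ {y}).toReal - (ν {y}).toReal| := by
        refine Summable.tsum_le_tsum (fun y => ?_) hsum.abs (tv_summable μ ν)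
        rw [← mul_sub, abs_mul]
        have h1 : |(g y).toReal| ≤ 1 := by
          rw [abs_of_nonneg ENNReal.toReal_nonneg]
          simpa using ENNReal.toReal_mono (by simp) (hg y)
        nlinarith [abs_nonneg ((μ {y}).toReal - (ν {y}).toReal)]

end Aux

section Chain

variable {E : Type*} [MeasurableSpace E] [MeasurableSingletonClass E] [Countable E]
variable {Ω : Type*} [MeasurableSpace Ω]

/-- The past σ-field at time `n`. -/
def Ffield (X : ℤ → Ω → E) (n : ℤ) : MeasurableSpace Ω :=
  ⨆ k : ℤ, ⨆ _ : k ≤ n, MeasurableSpace.comap (X k) inferInstance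

lemma comap_le_Ffield (X : ℤ → Ω → E) {k n : ℤ} (h : k ≤ n) :
    MeasurableSpace.comap (X k) inferInstance ≤ Ffield X n :=
  le_iSup_of_le k (le_iSup_of_le h le_rfl)

lemma Ffield_le (X : ℤ → Ω → E) (hX : ∀ n, Measurable (X n)) (n : ℤ) :
    Ffield X n ≤ ‹MeasurableSpace Ω› :=
  iSup_le fun k => iSup_le fun _ => (hX k).comap_le

lemma Ffield_mono (X : ℤ → Ω → E) {n m : ℤ} (h : n ≤ m) : Ffield X n ≤ Ffield X m :=
  iSup_le fun k => iSup_le fun hk => comap_le_Ffield X (hk.trans h)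

lemma preimage_mem_Ffield (X : ℤ → Ω → E) {k n : ℤ} (h : k ≤ n) (S : Set E) :
    MeasurableSet[Ffield X n] (X k ⁻¹' S) :=
  comap_le_Ffield X h _ ⟨S, measSetE S, rfl⟩

variable (P : Measure Ω) [IsProbabilityMeasure P]
variable (X : ℤ → Ω → E) (K : E → Measure E)

/-- One-step Markov property, in `ℝ≥0∞` set-measure form. -/
lemma step0 (hX : ∀ n, Measurable (X n)) (hK : ∀ x, IsProbabilityMeasure (K x))
    (hMarkov : ∀ n : ℤ, ∀ y : E,
      P[(Set.indicator {ω | X (n + 1) ω = y} fun _ => (1 : ℝ)) |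
          ⨆ k : ℤ, ⨆ _ : k ≤ n, MeasurableSpace.comap (X k) inferInstance]
        =ᵐ[P] fun ω => (K (X n ω) {y}).toReal)
    (n : ℤ) (y : E) {B : Set Ω} (hB : MeasurableSet[Ffield X n] B) :
    P (B ∩ X (n + 1) ⁻¹' {y}) = ∫⁻ ω in B, K (X n ω) {y} ∂P := by
  have hle : Ffield X n ≤ ‹MeasurableSpace Ω› := Ffield_le X hX n
  haveI : SigmaFinite (P.trim hle) := by
    haveI := isFiniteMeasure_trim (μ := P) hle
    infer_instance
  have hBm : MeasurableSet B := hle _ hB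
  have hsm : MeasurableSet {ω | X (n + 1) ω = y} := by
    have : {ω | X (n + 1) ω = y} = X (n + 1) ⁻¹' {y} := by
      ext ω; simp [Set.mem_preimage]
    rw [this]; exact hX _ (measurableSet_singleton y)
  have hint : Integrable (Set.indicator {ω | X (n + 1) ω = y} fun _ => (1 : ℝ)) P :=
    (integrable_const (1 : ℝ)).indicator hsm
  have h1 : ∫ ω in B, (Set.indicator {ω | X (n + 1) ω = y} fun _ => (1 : ℝ)) ω ∂P
      = ∫ ω in B, (K (X n ω) {y}).toReal ∂P := by
    rw [← setIntegral_condExp hle hint hB]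
    exact integral_congr_ae (ae_restrict_of_ae (hMarkov n y))
  -- compute LHS
  have hL : ∫ ω in B, (Set.indicator {ω | X (n + 1) ω = y} fun _ => (1 : ℝ)) ω ∂P
      = (P (B ∩ X (n + 1) ⁻¹' {y})).toReal := by
    rw [integral_indicator hsm, setIntegral_const, measureReal_def, Measure.restrict_apply hsm]
    have : {ω | X (n + 1) ω = y} ∩ B = B ∩ X (n + 1) ⁻¹' {y} := by
      ext ω; simp [Set.mem_preimage, and_comm]
    rw [this]; simp
  -- compute RHS
  have hmK : Measurable fun ω => K (X n ω) {y} :=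
    (measE (fun x : E => K x {y})).comp (hX n)
  have hR : ∫ ω in B, (K (X n ω) {y}).toReal ∂P
      = (∫⁻ ω in B, K (X n ω) {y} ∂P).toReal := by
    refine integral_toReal (hmK.aemeasurable.restrict) ?_
    refine Filter.Eventually.of_forall fun ω => ?_
    exact lt_of_le_of_lt prob_le_one ENNReal.one_lt_top
  rw [hL, hR] at h1
  have hfin1 : P (B ∩ X (n + 1) ⁻¹' {y}) ≠ ∞ := measure_ne_top _ _
  have hfin2 : ∫⁻ ω in B, K (X n ω) {y} ∂P ≠ ∞ := by
    refine (lt_of_le_of_lt ?_ ENNReal.one_lt_top).ne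
    calc ∫⁻ ω in B, K (X n ω) {y} ∂P ≤ ∫⁻ _ in B, 1 ∂P :=
      lintegral_mono fun ω => prob_le_one
    _ = P B := by rw [lintegral_one, Measure.restrict_apply_univ]
    _ ≤ 1 := prob_le_one
  exact (ENNReal.toReal_eq_toReal_iff' hfin1 hfin2).mp h1

/-- One-step transport of a test function. -/
lemma L1 (hX : ∀ n, Measurable (X n)) (hK : ∀ x, IsProbabilityMeasure (K x))
    (hMarkov : ∀ n : ℤ, ∀ y : E,
      P[(Set.indicator {ω | X (n + 1) ω = y} fun _ => (1 : ℝ)) |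
          ⨆ k : ℤ, ⨆ _ : k ≤ n, MeasurableSpace.comap (X k) inferInstance]
        =ᵐ[P] fun ω => (K (X n ω) {y}).toReal)
    (n : ℤ) (g : E → ℝ≥0∞) {B : Set Ω} (hB : MeasurableSet[Ffield X n] B) :
    ∫⁻ ω in B, g (X (n + 1) ω) ∂P = ∫⁻ ω in B, Kop K g (X n ω) ∂P := by
  have hle : Ffield X n ≤ ‹MeasurableSpace Ω› := Ffield_le X hX n
  have hBm : MeasurableSet B := hle _ hB
  have expand : ∀ ω, g (X (n + 1) ω)
      = ∑' y : E, Set.indicator (X (n + 1) ⁻¹' {y}) (fun _ => g y) ω := by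
    intro ω
    rw [tsum_eq_single (X (n + 1) ω) (fun y hy => Set.indicator_of_notMem (by
      simp only [Set.mem_preimage, Set.mem_singleton_iff]
      exact fun h => hy (h.symm ▸ rfl)) _)]
    exact (Set.indicator_of_mem (Set.mem_preimage.mpr rfl) (fun _ => g (X (n + 1) ω))).symm
  calc ∫⁻ ω in B, g (X (n + 1) ω) ∂P
      = ∫⁻ ω in B, ∑' y : E, Set.indicator (X (n + 1) ⁻¹' {y}) (fun _ => g y) ω ∂P := by
        exact lintegral_congr fun ω => expand ω
    _ = ∑' y : E, ∫⁻ ω in B, Set.indicator (X (n + 1) ⁻¹' {y}) (fun _ => g y) ω ∂P := by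
        refine lintegral_tsum fun y => ?_
        exact ((measurable_const.indicator (hX _ (measurableSet_singleton y))).aemeasurable).restrict
    _ = ∑' y : E, g y * P (B ∩ X (n + 1) ⁻¹' {y}) := by
        refine tsum_congr fun y => ?_
        rw [lintegral_indicator (hX _ (measurableSet_singleton y)),
          Measure.restrict_restrict (hX _ (measurableSet_singleton y)), lintegral_const,
          Measure.restrict_apply_univ, Set.inter_comm]
    _ = ∑' y : E, ∫⁻ ω in B, g y * K (X n ω) {y} ∂P := by
        refine tsum_congr fun y => ?_
        have hmK : Measurable fun ω => K (X n ω) {y} :=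
          (measE (fun x : E => K x {y})).comp (hX n)
        rw [step0 P X K hX hK hMarkov n y hB, ← lintegral_const_mul (g y) hmK]
    _ = ∫⁻ ω in B, ∑' y : E, g y * K (X n ω) {y} ∂P := by
        refine (lintegral_tsum fun y => ?_).symm
        have hmK : Measurable fun ω => K (X n ω) {y} :=
          (measE (fun x : E => K x {y})).comp (hX n)
        exact (measurable_const.mul hmK).aemeasurable.restrict
    _ = ∫⁻ ω in B, Kop K g (X n ω) ∂P := by
        refine lintegral_congr fun ω => ?_
        rw [Kop_eq_tsum]

end Chain

section Chain2

variable {E : Type*} [MeasurableSpace E] [MeasurableSingletonClass E] [Countable E]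
variable {Ω : Type*} [MeasurableSpace Ω]
variable (P : Measure Ω) [IsProbabilityMeasure P]
variable (X : ℤ → Ω → E) (K : E → Measure E)

/-- Multi-step transport. -/
lemma L2 (hX : ∀ n, Measurable (X n)) (hK : ∀ x, IsProbabilityMeasure (K x))
    (hMarkov : ∀ n : ℤ, ∀ y : E,
      P[(Set.indicator {ω | X (n + 1) ω = y} fun _ => (1 : ℝ)) |
          ⨆ k : ℤ, ⨆ _ : k ≤ n, MeasurableSpace.comap (X k) inferInstance]
        =ᵐ[P] fun ω => (K (X n ω) {y}).toReal) :
    ∀ (j : ℕ) (n : ℤ) (g : E → ℝ≥0∞) (B : Set Ω), MeasurableSet[Ffield X n] B →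
      ∫⁻ ω in B, g (X (n + (j : ℤ)) ω) ∂P = ∫⁻ ω in B, ((Kop K)^[j] g) (X n ω) ∂P := by
  intro j
  induction j with
  | zero => intro n g B hB; simp
  | succ j ih =>
    intro n g B hB
    have harith : n + ((j + 1 : ℕ) : ℤ) = (n + 1) + (j : ℤ) := by push_cast; ring
    have hB' : MeasurableSet[Ffield X (n + 1)] B :=
      Ffield_mono X (by omega) _ hB
    calc ∫⁻ ω in B, g (X (n + ((j + 1 : ℕ) : ℤ)) ω) ∂P
        = ∫⁻ ω in B, g (X ((n + 1) + (j : ℤ)) ω) ∂P := by rw [harith]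
      _ = ∫⁻ ω in B, ((Kop K)^[j] g) (X (n + 1) ω) ∂P := ih (n + 1) g B hB'
      _ = ∫⁻ ω in B, (Kop K ((Kop K)^[j] g)) (X n ω) ∂P :=
          L1 P X K hX hK hMarkov n ((Kop K)^[j] g) hB
      _ = ∫⁻ ω in B, ((Kop K)^[j + 1] g) (X n ω) ∂P := by
          refine lintegral_congr fun ω => ?_
          rw [Function.iterate_succ_apply']

/-- Conditional probability of a consecutive cylinder, as a function of the left state. -/
noncomputable def Hfun (K : E → Measure E) : ℕ → (ℕ → Set E) → E → ℝ≥0∞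
  | 0, _ => fun _ => 1
  | r + 1, S => fun x => (S 0).indicator 1 x * Kop K (Hfun K r (fun j => S (j + 1))) x

lemma Hfun_le_one {K : E → Measure E} (hK : ∀ x, IsProbabilityMeasure (K x)) :
    ∀ (r : ℕ) (S : ℕ → Set E) (x : E), Hfun K r S x ≤ 1 := by
  intro r
  induction r with
  | zero => intro S x; simp [Hfun]
  | succ r ih =>
    intro S x
    rw [show Hfun K (r + 1) S x
      = (S 0).indicator 1 x * Kop K (Hfun K r (fun j => S (j + 1))) x from rfl]
    calc (S 0).indicator 1 x * Kop K (Hfun K r (fun j => S (j + 1))) x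
        ≤ 1 * 1 := by
          refine mul_le_mul' ?_ (Kop_le_one hK (fun y => ih _ y) x)
          exact Set.indicator_le_self' (by simp) x
      _ = 1 := one_mul 1

/-- Consecutive cylinder sets. -/
def cyl (X : ℤ → Ω → E) (n : ℤ) (r : ℕ) (S : ℕ → Set E) : Set Ω :=
  ⋂ j ∈ Finset.range r, X (n + (j : ℤ)) ⁻¹' S j

lemma cyl_mem_iff (n : ℤ) (r : ℕ) (S : ℕ → Set E) (ω : Ω) :
    ω ∈ cyl X n r S ↔ ∀ j < r, X (n + (j : ℤ)) ω ∈ S j := by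
  simp [cyl, Finset.mem_range]

lemma cyl_succ (n : ℤ) (r : ℕ) (S : ℕ → Set E) :
    cyl X n (r + 1) S = X n ⁻¹' S 0 ∩ cyl X (n + 1) r (fun j => S (j + 1)) := by
  ext ω
  rw [Set.mem_inter_iff, cyl_mem_iff, cyl_mem_iff, Set.mem_preimage]
  constructor
  · intro h
    refine ⟨by simpa using h 0 (Nat.succ_pos r), fun j hj => ?_⟩
    have := h (j + 1) (by omega)
    have harith : n + ((j + 1 : ℕ) : ℤ) = n + 1 + (j : ℤ) := by push_cast; ring
    rwa [harith] at this
  · rintro ⟨h0, h⟩ j hj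
    cases j with
    | zero => simpa using h0
    | succ j =>
      have := h j (by omega)
      have harith : n + ((j + 1 : ℕ) : ℤ) = n + 1 + (j : ℤ) := by push_cast; ring
      rwa [← harith] at this

/-- Cylinder probability over a past event. -/
lemma C1 (hX : ∀ n, Measurable (X n)) (hK : ∀ x, IsProbabilityMeasure (K x))
    (hMarkov : ∀ n : ℤ, ∀ y : E,
      P[(Set.indicator {ω | X (n + 1) ω = y} fun _ => (1 : ℝ)) |
          ⨆ k : ℤ, ⨆ _ : k ≤ n, MeasurableSpace.comap (X k) inferInstance]
        =ᵐ[P] fun ω => (K (X n ω) {y}).toReal) :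
    ∀ (r : ℕ) (n : ℤ) (S : ℕ → Set E) (B : Set Ω), MeasurableSet[Ffield X n] B →
      P (B ∩ cyl X n r S) = ∫⁻ ω in B, Hfun K r S (X n ω) ∂P := by
  intro r
  induction r with
  | zero =>
    intro n S B hB
    simp [cyl, Hfun, Measure.restrict_apply_univ]
  | succ r ih =>
    intro n S B hB
    have hle : Ffield X n ≤ ‹MeasurableSpace Ω› := Ffield_le X hX n
    have hBm : MeasurableSet B := hle _ hB
    have hsE : MeasurableSet (X n ⁻¹' S 0) := hX n (measSetE _)
    have hB' : MeasurableSet[Ffield X (n + 1)] (B ∩ X n ⁻¹' S 0) :=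
      Ffield_mono X (by omega) _ (hB.inter (preimage_mem_Ffield X le_rfl _))
    have hBF : MeasurableSet[Ffield X n] (B ∩ X n ⁻¹' S 0) :=
      hB.inter (preimage_mem_Ffield X le_rfl _)
    calc P (B ∩ cyl X n (r + 1) S)
        = P ((B ∩ X n ⁻¹' S 0) ∩ cyl X (n + 1) r (fun j => S (j + 1))) := by
          rw [cyl_succ, Set.inter_assoc]
      _ = ∫⁻ ω in B ∩ X n ⁻¹' S 0, Hfun K r (fun j => S (j + 1)) (X (n + 1) ω) ∂P :=
          ih (n + 1) _ _ hB'
      _ = ∫⁻ ω in B ∩ X n ⁻¹' S 0, Kop K (Hfun K r (fun j => S (j + 1))) (X n ω) ∂P :=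
          L1 P X K hX hK hMarkov n _ hBF
      _ = ∫⁻ ω in B, (X n ⁻¹' S 0).indicator
            (fun ω => Kop K (Hfun K r (fun j => S (j + 1))) (X n ω)) ω ∂P := by
          rw [lintegral_indicator hsE, Measure.restrict_restrict hsE, Set.inter_comm]
      _ = ∫⁻ ω in B, Hfun K (r + 1) S (X n ω) ∂P := by
          refine lintegral_congr fun ω => ?_
          rw [show Hfun K (r + 1) S (X n ω)
            = (S 0).indicator 1 (X n ω) * Kop K (Hfun K r (fun j => S (j + 1))) (X n ω) from rfl]
          by_cases hmem : X n ω ∈ S 0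
          · rw [Set.indicator_of_mem (Set.mem_preimage.mpr hmem),
              Set.indicator_of_mem hmem]
            simp
          · rw [Set.indicator_of_notMem (fun h => hmem (Set.mem_preimage.mp h)),
              Set.indicator_of_notMem hmem]
            simp

end Chain2

section Main

variable {E : Type*} [MeasurableSpace E] [MeasurableSingletonClass E] [Countable E]
variable {Ω : Type*} [MeasurableSpace Ω]
variable (P : Measure Ω) [IsProbabilityMeasure P]
variable (X : ℤ → Ω → E) (K : E → Measure E) (π : Measure E) [IsProbabilityMeasure π]

/-- Key independence: an asymptotic event is independent of every cylinder. -/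
lemma key_indep (hX : ∀ n, Measurable (X n)) (hK : ∀ x, IsProbabilityMeasure (K x))
    (hstat : ∀ n : ℤ, Measure.map (X n) P = π)
    (hMarkov : ∀ n : ℤ, ∀ y : E,
      P[(Set.indicator {ω | X (n + 1) ω = y} fun _ => (1 : ℝ)) |
          ⨆ k : ℤ, ⨆ _ : k ≤ n, MeasurableSpace.comap (X k) inferInstance]
        =ᵐ[P] fun ω => (K (X n ω) {y}).toReal)
    (hTV : ∀ x : E,
      Tendsto (fun n : ℕ => ∑' y : E, |(kernelIter K x n {y}).toReal - (π {y}).toReal|)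
        atTop (𝓝 0))
    {A : Set Ω} (hA : ∀ n : ℤ, MeasurableSet[Ffield X n] A)
    (n : ℤ) (r : ℕ) (S : ℕ → Set E) :
    P (A ∩ cyl X n r S) = P A * P (cyl X n r S) := by
  classical
  set g : E → ℝ≥0∞ := Hfun K r S with hg_def
  have hg1 : ∀ y, g y ≤ 1 := fun y => Hfun_le_one hK r S y
  have hgm : Measurable g := measE g
  -- the cylinder probability
  have hPC : P (cyl X n r S) = ∫⁻ y, g y ∂π := by
    have := C1 P X K hX hK hMarkov r n S Set.univ MeasurableSet.univ
    rw [Set.univ_inter] at this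
    rw [this, Measure.restrict_univ, ← hstat n, lintegral_map hgm (hX n)]
  -- representation of P (A ∩ C) for every N
  have hAC : ∀ N : ℕ, P (A ∩ cyl X n r S)
      = ∫⁻ ω in A, ((Kop K)^[N] g) (X (n - (N : ℤ)) ω) ∂P := by
    intro N
    have h1 : P (A ∩ cyl X n r S) = ∫⁻ ω in A, g (X n ω) ∂P :=
      C1 P X K hX hK hMarkov r n S A (hA n)
    have h2 := L2 P X K hX hK hMarkov N (n - (N : ℤ)) g A (hA _)
    rw [show n - (N : ℤ) + (N : ℤ) = n by ring] at h2
    rw [h1, h2]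
  -- real-valued quantities
  set c : ℝ := (∫⁻ y, g y ∂π).toReal with hc_def
  have habs : ∀ N : ℕ, |(P (A ∩ cyl X n r S)).toReal - (P A).toReal * c|
      ≤ ∫ x, (∑' y : E, |(kernelIter K x N {y}).toReal - (π {y}).toReal|) ∂π := by
    intro N
    set φ : Ω → ℝ := fun ω => (((Kop K)^[N] g) (X (n - (N : ℤ)) ω)).toReal with hφ_def
    set ψ : Ω → ℝ := fun ω =>
      ∑' y : E, |(kernelIter K (X (n - (N : ℤ)) ω) N {y}).toReal - (π {y}).toReal| with hψ_def
    have hφm : Measurable φ :=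
      ((measE (fun x : E => (((Kop K)^[N] g) x).toReal)).comp (hX _))
    have hψm : Measurable ψ :=
      ((measE (fun x : E => ∑' y : E,
        |(kernelIter K x N {y}).toReal - (π {y}).toReal|)).comp (hX _))
    have hφ_le : ∀ ω, |φ ω| ≤ 1 := by
      intro ω
      rw [abs_of_nonneg ENNReal.toReal_nonneg]
      simpa using ENNReal.toReal_mono (by simp) (Kop_iter_le_one hK hg1 N _)
    have hψ_nonneg : ∀ ω, 0 ≤ ψ ω := fun ω => tv_nonneg _ _
    have hψ_le : ∀ ω, |ψ ω| ≤ 2 := by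
      intro ω
      rw [abs_of_nonneg (hψ_nonneg ω)]
      haveI := kernelIter_prob K hK (X (n - (N : ℤ)) ω) N
      exact tv_le_two _ _
    have hφ_int : Integrable φ (P.restrict A) :=
      ⟨hφm.aestronglyMeasurable,
        HasFiniteIntegral.of_bounded (C := 1) (Filter.Eventually.of_forall hφ_le)⟩
    have hψ_int : Integrable ψ (P.restrict A) :=
      ⟨hψm.aestronglyMeasurable,
        HasFiniteIntegral.of_bounded (C := 2) (Filter.Eventually.of_forall hψ_le)⟩
    have hψ_intP : Integrable ψ P :=
      ⟨hψm.aestronglyMeasurable,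
        HasFiniteIntegral.of_bounded (C := 2) (Filter.Eventually.of_forall hψ_le)⟩
    -- LHS as an integral
    have hPAC : (P (A ∩ cyl X n r S)).toReal = ∫ ω in A, φ ω ∂P := by
      rw [hAC N]
      refine (integral_toReal ?_ ?_).symm
      · exact (((measE (fun x : E => ((Kop K)^[N] g) x)).comp (hX _)).aemeasurable).restrict
      · refine Filter.Eventually.of_forall fun ω => ?_
        exact lt_of_le_of_lt (Kop_iter_le_one hK hg1 N _) ENNReal.one_lt_top
    have hPAconst : (P A).toReal * c = ∫ _ in A, c ∂P := by
      rw [setIntegral_const, smul_eq_mul, measureReal_def]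
    -- pointwise TV bound
    have hpt : ∀ ω, |φ ω - c| ≤ ψ ω := by
      intro ω
      haveI := kernelIter_prob K hK (X (n - (N : ℤ)) ω) N
      have := tv_bound (kernelIter K (X (n - (N : ℤ)) ω) N) π hg1
      rwa [← Kop_iter] at this
    calc |(P (A ∩ cyl X n r S)).toReal - (P A).toReal * c|
        = |∫ ω in A, (φ ω - c) ∂P| := by
          rw [hPAC, hPAconst, integral_sub hφ_int (integrable_const c)]
      _ ≤ ∫ ω in A, |φ ω - c| ∂P := by
          simpa using norm_integral_le_integral_norm (μ := P.restrict A) (f := fun ω => φ ω - c)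
      _ ≤ ∫ ω in A, ψ ω ∂P := by
          refine integral_mono (hφ_int.sub (integrable_const c)).abs hψ_int hpt
      _ ≤ ∫ ω, ψ ω ∂P := setIntegral_le_integral hψ_intP (Filter.Eventually.of_forall hψ_nonneg)
      _ = ∫ x, (∑' y : E, |(kernelIter K x N {y}).toReal - (π {y}).toReal|) ∂π := by
          have hmap := integral_map (μ := P) (hX (n - (N : ℤ))).aemeasurable
            (measE (fun x : E => ∑' y : E,
              |(kernelIter K x N {y}).toReal - (π {y}).toReal|)).aestronglyMeasurable
          rw [hstat (n - (N : ℤ))] at hmap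
          exact hmap.symm
  -- the integral bound tends to zero
  have hT0 : Tendsto (fun N : ℕ =>
      ∫ x, (∑' y : E, |(kernelIter K x N {y}).toReal - (π {y}).toReal|) ∂π)
      atTop (𝓝 0) := by
    have := tendsto_integral_of_dominated_convergence (μ := π)
      (F := fun N x => ∑' y : E, |(kernelIter K x N {y}).toReal - (π {y}).toReal|)
      (f := fun _ => (0 : ℝ)) (bound := fun _ => (2 : ℝ))
      (fun N => (measE _).aestronglyMeasurable)
      (integrable_const 2)
      (fun N => Filter.Eventually.of_forall fun x => by
        haveI := kernelIter_prob K hK x N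
        rw [Real.norm_eq_abs, abs_of_nonneg (tv_nonneg _ _)]
        exact tv_le_two _ _)
      (Filter.Eventually.of_forall fun x => hTV x)
    simpa using this
  -- conclude
  have hdiff : |(P (A ∩ cyl X n r S)).toReal - (P A).toReal * c| = 0 := by
    have hle0 : |(P (A ∩ cyl X n r S)).toReal - (P A).toReal * c| ≤ 0 :=
      ge_of_tendsto hT0 (Filter.Eventually.of_forall habs)
    exact le_antisymm hle0 (abs_nonneg _)
  have heq : (P (A ∩ cyl X n r S)).toReal = (P A).toReal * c := by
    have := abs_eq_zero.mp hdiff; linarith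
  have hfin1 : P (A ∩ cyl X n r S) ≠ ∞ := measure_ne_top _ _
  have hfin2 : P A * P (cyl X n r S) ≠ ∞ :=
    ENNReal.mul_ne_top (measure_ne_top _ _) (measure_ne_top _ _)
  refine (ENNReal.toReal_eq_toReal_iff' hfin1 hfin2).mp ?_
  rw [heq, ENNReal.toReal_mul, hc_def, ← hPC]

end Main

/-- a stationary irreducible aperiodic Markov chain `(X_n)_{n ∈ ℤ}` on a
countable state space has a trivial asymptotic σ-field `⋂_n σ(X_k : k ≤ n)`:
every event in it has probability `0` or `1`. (Irreducibility, aperiodicity and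
positive recurrence are used through the total variation convergence
`Kⁿ(x,·) → π` for every `x`.) -/
theorem stmt_1 {E : Type*} [MeasurableSpace E] [MeasurableSingletonClass E] [Countable E]
    {Ω : Type*} [MeasurableSpace Ω] (P : Measure Ω) [IsProbabilityMeasure P]
    (X : ℤ → Ω → E) (hX : ∀ n, Measurable (X n))
    (K : E → Measure E) (hK : ∀ x, IsProbabilityMeasure (K x))
    (π : Measure E) [IsProbabilityMeasure π]
    (hπinv : π.bind K = π)
    (hstat : ∀ n : ℤ, Measure.map (X n) P = π)
    (hMarkov : ∀ n : ℤ, ∀ y : E,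
      P[(Set.indicator {ω | X (n + 1) ω = y} fun _ => (1 : ℝ)) |
          ⨆ k : ℤ, ⨆ _ : k ≤ n, MeasurableSpace.comap (X k) inferInstance]
        =ᵐ[P] fun ω => (K (X n ω) {y}).toReal)
    (hTV : ∀ x : E,
      Tendsto (fun n : ℕ => ∑' y : E, |(kernelIter K x n {y}).toReal - (π {y}).toReal|)
        atTop (𝓝 0)) :
    ∀ A : Set Ω,
      MeasurableSet[⨅ n : ℤ, ⨆ k : ℤ, ⨆ _ : k ≤ n,
        MeasurableSpace.comap (X k) inferInstance] A →
      P A = 0 ∨ P A = 1 := by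
  classical
  intro A hA
  have hA' : ∀ n : ℤ, MeasurableSet[Ffield X n] A := fun n =>
    (iInf_le (fun n : ℤ => Ffield X n) n) A hA
  have hAmb : MeasurableSet A := Ffield_le X hX 0 _ (hA' 0)
  have key := fun (n : ℤ) (r : ℕ) (S : ℕ → Set E) =>
    key_indep P X K π hX hK hstat hMarkov hTV hA' n r S
  -- Dynkin argument over `Ffield X 0`
  set 𝒞 : Set (Set Ω) := piiUnionInter
    (fun k : ℤ => {s | MeasurableSet[MeasurableSpace.comap (X k) inferInstance] s})
    {k : ℤ | k ≤ (0 : ℤ)} with h𝒞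
  have hgen : Ffield X 0 = MeasurableSpace.generateFrom 𝒞 :=
    (generateFrom_piiUnionInter_measurableSet
      (fun k : ℤ => MeasurableSpace.comap (X k) inferInstance) {k : ℤ | k ≤ (0 : ℤ)}).symm
  have hpi : IsPiSystem 𝒞 :=
    isPiSystem_piiUnionInter _
      (fun k => @MeasurableSpace.isPiSystem_measurableSet Ω
        (MeasurableSpace.comap (X k) inferInstance)) _
  have hbasic : ∀ t ∈ 𝒞, P (A ∩ t) = P A * P t := by
    rintro t ⟨p, hpS, f, hf, rfl⟩
    by_cases hp : p = ∅
    · subst hp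
      simp [measure_univ]
    · have hne : p.Nonempty := Finset.nonempty_iff_ne_empty.mpr hp
      set m := p.min' hne with hm_def
      set M := p.max' hne with hM_def
      have hT : ∀ k : ℤ, ∃ Sk : Set E,
          (k ∈ p → X k ⁻¹' Sk = f k) ∧ (k ∉ p → Sk = Set.univ) := by
        intro k
        by_cases hk : k ∈ p
        · obtain ⟨s', _, hs'⟩ := MeasurableSpace.measurableSet_comap.mp (hf k hk)
          exact ⟨s', fun _ => hs', fun h => absurd hk h⟩
        · exact ⟨Set.univ, fun h => absurd h hk, fun _ => rfl⟩
      choose T hT1 hT2 using hT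
      set r : ℕ := (M - m).toNat + 1 with hr_def
      set S : ℕ → Set E := fun j => T (m + (j : ℤ)) with hS_def
      have hconv : (⋂ x ∈ p, f x) = cyl X m r S := by
        ext ω
        rw [cyl_mem_iff]
        simp only [Set.mem_iInter]
        constructor
        · intro h j hj
          by_cases hk : (m + (j : ℤ)) ∈ p
          · have hω := h _ hk
            rw [← hT1 _ hk] at hω
            exact hω
          · show X (m + (j : ℤ)) ω ∈ T (m + (j : ℤ))
            rw [hT2 _ hk]
            trivial
        · intro h k hk
          have hm' : m ≤ k := p.min'_le k hk
          have hM' : k ≤ M := p.le_max' k hk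
          set j : ℕ := (k - m).toNat with hj_def
          have hjc : ((j : ℕ) : ℤ) = k - m := Int.toNat_of_nonneg (by omega)
          have hjk : m + (j : ℤ) = k := by omega
          have hjr : j < r := by
            have h1 : ((j : ℕ) : ℤ) ≤ M - m := by omega
            have h2 : (((M - m).toNat : ℕ) : ℤ) = M - m := Int.toNat_of_nonneg (by omega)
            omega
          have hω := h j hjr
          rw [hS_def] at hω
          simp only at hω
          rw [hjk] at hω
          rw [← hT1 k hk]
          exact hω
      rw [hconv]
      exact key m r S
  have hcompl : ∀ t : Set Ω, MeasurableSet[Ffield X 0] t →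
      P (A ∩ t) = P A * P t → P (A ∩ tᶜ) = P A * P tᶜ := by
    intro t ht hC
    have htm : MeasurableSet t := Ffield_le X hX 0 _ ht
    have h1 : P (A ∩ t) + P (A ∩ tᶜ) = P A := by
      have := measure_inter_add_diff (μ := P) A htm
      rwa [Set.diff_eq] at this
    have h3 : P A * P t + P (A ∩ tᶜ) = P A := by rw [← hC]; exact h1
    have h4 : P A * P t + P A * P tᶜ = P A := by
      rw [← mul_add, prob_compl_eq_one_sub htm, add_comm (P t),
        tsub_add_cancel_of_le prob_le_one, mul_one]
    have hfin : P A * P t ≠ ∞ := ENNReal.mul_ne_top (measure_ne_top _ _) (measure_ne_top _ _)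
    exact (ENNReal.add_right_inj hfin).mp (h3.trans h4.symm)
  have hunion : ∀ fs : ℕ → Set Ω, Pairwise (Function.onFun Disjoint fs) →
      (∀ i, MeasurableSet[Ffield X 0] (fs i)) →
      (∀ i, P (A ∩ fs i) = P A * P (fs i)) →
      P (A ∩ ⋃ i, fs i) = P A * P (⋃ i, fs i) := by
    intro fs hdisj hmeas hC
    have hm : ∀ i, MeasurableSet (fs i) := fun i => Ffield_le X hX 0 _ (hmeas i)
    rw [Set.inter_iUnion,
      measure_iUnion (fun i j hij => ((hdisj hij).mono
          Set.inter_subset_right Set.inter_subset_right))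
        (fun i => hAmb.inter (hm i)),
      measure_iUnion hdisj hm]
    calc ∑' i, P (A ∩ fs i) = ∑' i, P A * P (fs i) := tsum_congr hC
      _ = P A * ∑' i, P (fs i) := ENNReal.tsum_mul_left
  have main : ∀ ⦃t : Set Ω⦄, MeasurableSet[Ffield X 0] t → P (A ∩ t) = P A * P t :=
    MeasurableSpace.induction_on_inter (m := Ffield X 0) hgen hpi
      (by simp) hbasic hcompl hunion
  have hself : P A = P A * P A := by
    have := main (hA' 0)
    rwa [Set.inter_self] at this
  rcases eq_or_ne (P A) 0 with h0 | h0
  · exact Or.inl h0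
  · right
    have h1 : P A * 1 = P A * P A := by rw [mul_one]; exact hself
    exact ((ENNReal.mul_right_inj h0 (measure_ne_top _ _)).mp h1).symm
end

section
/- Let $\nu$ be a probability measure on a measurable space and $a\ge 0$. If $\int \mathbf{1}_{[\nu\{x\}=a]}\,\nu(dx)=1$, then either $a=0$ and $\nu$ is diffuse (atomless), or $a>0$, $1/a$ is a positive integer, and $\nu$ is the uniform distribution on a set of exactly $1/a$ points. -/
open MeasureTheory
open scoped ENNReal

lemma measure_finset_eq_sum {E : Type*} [MeasurableSpace E] [MeasurableSingletonClass E]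
    (ν : Measure E) (F : Finset E) : ν ↑F = ∑ x ∈ F, ν {x} := by
  have : (↑F : Set E) = ⋃ x ∈ F, {x} := by ext y; simp
  rw [this, measure_biUnion_finset]
  · exact fun x _ y _ hxy => by simpa using hxy
  · exact fun x _ => measurableSet_singleton x

/-- let `ν` be a probability measure and `a ≥ 0`. If
`∫ 𝟙_{[ν{x} = a]} dν = 1`, then either `a = 0` and `ν` is diffuse (atomless), or
`a > 0`, `1/a` is a positive integer, and `ν` is the uniform distribution on a set of
exactly `1/a` points. -/
theorem stmt_2 {E : Type*} [MeasurableSpace E] [MeasurableSingletonClass E]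
    (ν : Measure E) [IsProbabilityMeasure ν] (a : ℝ≥0∞)
    (h : ∫⁻ x, Set.indicator {y : E | ν {y} = a} 1 x ∂ν = 1) :
    (a = 0 ∧ ∀ x : E, ν {x} = 0) ∨
      (0 < a ∧ ∃ F : Finset E, (F.card : ℝ≥0∞) = a⁻¹ ∧ ν ↑F = 1 ∧
        ∀ x ∈ F, ν {x} = a) := by
  set S : Set E := {y : E | ν {y} = a} with hS
  have hSle : (1 : ℝ≥0∞) ≤ ν S := h ▸ lintegral_indicator_one_le S
  rcases eq_or_ne a 0 with ha | ha
  · left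
    refine ⟨ha, fun x => ?_⟩
    by_contra hx
    have hxS : S ⊆ {x}ᶜ := fun y hy hxy => by
      simp only [Set.mem_singleton_iff] at hxy
      subst hxy; exact hx (ha ▸ hy)
    have h1 : ν S ≤ ν {x}ᶜ := measure_mono hxS
    have h2 : ν {x}ᶜ = 1 - ν {x} := by
      rw [measure_compl (measurableSet_singleton x) (measure_ne_top ν _)]
      simp
    have h3 : (1 : ℝ≥0∞) ≤ 1 - ν {x} := le_trans hSle (h2 ▸ h1)
    have h4 : ν {x} = 0 := by
      by_contra h4
      have : 1 - ν {x} < 1 :=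
        ENNReal.sub_lt_self ENNReal.one_ne_top one_ne_zero h4
      exact absurd h3 (not_le.mpr this)
    exact hx h4
  · right
    have hapos : 0 < a := pos_iff_ne_zero.mpr ha
    have hatop : a ≠ ⊤ := by
      intro htop
      have : S = ∅ := by
        ext y
        simp only [hS, Set.mem_setOf_eq, Set.mem_empty_iff_false, iff_false]
        intro hy
        have hle : ν {y} ≤ 1 := prob_le_one
        rw [hy, htop] at hle
        simp at hle
      rw [this] at hSle
      simp at hSle
    -- finite subsets of S have card ≤ a⁻¹ because ν F = card * a ≤ 1
    have key : ∀ F : Finset E, ↑F ⊆ S → (F.card : ℝ≥0∞) * a ≤ 1 := by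
      intro F hF
      have : ν ↑F = (F.card : ℝ≥0∞) * a := by
        rw [measure_finset_eq_sum]
        rw [Finset.sum_congr rfl fun x hx => hF hx]
        simp [mul_comm]
      calc (F.card : ℝ≥0∞) * a = ν ↑F := this.symm
        _ ≤ 1 := prob_le_one
    have hSfin : S.Finite := by
      by_contra hinf
      obtain ⟨n, hn⟩ := ENNReal.exists_nat_gt (ENNReal.inv_ne_top.mpr ha)

      obtain ⟨F, hFS, hFcard⟩ := (show S.Infinite from hinf).exists_subset_card_eq n
      have := key F hFS
      rw [hFcard] at this
      have : (n : ℝ≥0∞) ≤ a⁻¹ := by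
        rwa [ENNReal.le_inv_iff_mul_le]
      exact absurd hn (not_lt.mpr this)
    set F := hSfin.toFinset with hF
    have hFS : (↑F : Set E) = S := hSfin.coe_toFinset
    have hmemF : ∀ x ∈ F, ν {x} = a := fun x hx => (hSfin.mem_toFinset.mp hx : x ∈ S)
    have hνF : ν ↑F = (F.card : ℝ≥0∞) * a := by
      rw [measure_finset_eq_sum, Finset.sum_congr rfl hmemF]
      simp [mul_comm]
    have hνF1 : ν ↑F = 1 := le_antisymm prob_le_one (hFS ▸ hSle)
    have hcard : (F.card : ℝ≥0∞) * a = 1 := hνF.symm.trans hνF1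
    refine ⟨hapos, F, ?_, hνF1, hmemF⟩
    have := congrArg (· * a⁻¹) hcard
    simpa [mul_assoc, ENNReal.mul_inv_cancel ha hatop] using this
end

section
/- Let $X$ be a random variable whose conditional law given a sub-sigma-field $\mathcal{F}$ is almost surely the uniform distribution on a set of $N$ points (for a fixed integer $N\ge 1$), with a regular version $(\nu_\omega)$. Then there exists an $\sigma(X)\vee\mathcal{F}$-measurable random variable $U$ with values in $\{1,\dots,N\}$ such that $U$ is independent of $\mathcal{F}$ and uniformly distributed on $\{1,\dots,N\}$. -/
open MeasureTheory ProbabilityTheory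
open scoped ENNReal

section AuxLemmas
variable {E : Type*} [MeasurableSpace E] [MeasurableSingletonClass E]

lemma aux_measure_eq (ν : Measure E) [IsProbabilityMeasure ν] {F : Finset E} {N : ℕ}
    (hF1 : ν ↑F = 1)
    (hatom : ∀ x ∈ F, ν {x} = (N : ℝ≥0∞)⁻¹) (p : E → Prop) [DecidablePred p] :
    ν {x | p x} = (F.filter p).card * (N : ℝ≥0∞)⁻¹ := by
  set s : Set E := {x | p x} with hs
  have hFc : ν (↑F : Set E)ᶜ = 0 := by
    rw [measure_compl F.measurableSet (measure_ne_top _ _), hF1, measure_univ, tsub_self]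
  have h1 : ν s = ν (s ∩ ↑F) := by
    have : ν (s \ ↑F) = 0 :=
      measure_mono_null (Set.diff_subset_compl s ↑F) hFc
    rw [← measure_inter_add_diff s F.measurableSet, this, add_zero]
  have h2 : s ∩ ↑F = ⋃ x ∈ F.filter p, ({x} : Set E) := by
    ext y
    simp only [Set.mem_inter_iff, Set.mem_iUnion, Finset.mem_filter, Set.mem_singleton_iff, hs,
      Set.mem_setOf_eq]
    constructor
    · rintro ⟨hy, hyF⟩; exact ⟨y, ⟨hyF, hy⟩, rfl⟩
    · rintro ⟨x, ⟨hxF, hxs⟩, rfl⟩; exact ⟨hxs, hxF⟩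
  rw [h1, h2, measure_biUnion_finset ?disj (fun b _ => measurableSet_singleton b)]
  · rw [Finset.sum_congr rfl (fun x hx => hatom x (Finset.mem_filter.1 hx).1)]
    rw [Finset.sum_const, nsmul_eq_mul]
  case disj =>
    intro x _ y _ hxy
    simp [Function.onFun, Set.disjoint_singleton, hxy]

open scoped Classical in
lemma key_aux (ν : Measure E) [IsProbabilityMeasure ν] (f : E → ℝ) (hf : MeasurableEmbedding f)
    (N : ℕ) (hN : 1 ≤ N) (F : Finset E) (hFcard : F.card = N) (hF1 : ν ↑F = 1)
    (hatom : ∀ x ∈ F, ν {x} = (N : ℝ≥0∞)⁻¹) (k : ℕ) (hk : k ∈ Finset.Icc 1 N) :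
    ν {x | min N (1 + ⌊(ν {y | f y < f x}).toReal * N⌋₊) = k} = (N : ℝ≥0∞)⁻¹ := by
  have hN0 : (N : ℝ≥0∞) ≠ 0 := by exact_mod_cast Nat.one_le_iff_ne_zero.1 hN
  set G : E → ℕ := fun x => min N (1 + ⌊(ν {y | f y < f x}).toReal * N⌋₊) with hG
  set rank : E → ℕ := fun x => (F.filter (fun y => f y < f x)).card with hrank
  -- value of ν on the strict lower set
  have hlow : ∀ x, ν {y | f y < f x} = (rank x : ℝ≥0∞) * (N : ℝ≥0∞)⁻¹ := by
    intro x
    rw [aux_measure_eq ν hF1 hatom (fun y => f y < f x)]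
  -- rank < N on F
  have hrankF : ∀ x ∈ F, rank x < N := by
    intro x hx
    rw [← hFcard]
    apply Finset.card_lt_card
    constructor
    · exact Finset.filter_subset _ _
    · intro hsub
      have := hsub hx
      simp at this
  -- G = 1 + rank on F
  have hGF : ∀ x ∈ F, G x = 1 + rank x := by
    intro x hx
    have h1 : ((ν {y | f y < f x}).toReal * N) = (rank x : ℝ) := by
      rw [hlow x, ENNReal.toReal_mul, ENNReal.toReal_inv]
      simp only [ENNReal.toReal_natCast]
      field_simp
    rw [hG]
    simp only [h1, Nat.floor_natCast]
    have := hrankF x hx; omega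
  have hmono : ∀ x ∈ F, ∀ y ∈ F, f x < f y → rank x < rank y := by
    intro x hx y hy hxy
    apply Finset.card_lt_card
    constructor
    · intro z hz
      rw [Finset.mem_filter] at hz ⊢
      exact ⟨hz.1, hz.2.trans hxy⟩
    · intro hsub
      have := hsub (Finset.mem_filter.2 ⟨hx, hxy⟩)
      simp at this
  have hinj : Set.InjOn G ↑F := by
    intro x hx y hy hxy
    by_contra hne
    have hfne : f x ≠ f y := fun h => hne (hf.injective h)
    rcases lt_or_gt_of_ne hfne with h | h
    · have := hmono x hx y hy h; rw [hGF x hx, hGF y hy] at hxy; omega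
    · have := hmono y hy x hx h; rw [hGF x hx, hGF y hy] at hxy; omega
  have himage : F.image G = Finset.Icc 1 N := by
    apply Finset.eq_of_subset_of_card_le
    · intro j hj
      rcases Finset.mem_image.1 hj with ⟨x, hx, rfl⟩
      rw [hGF x hx]
      have := hrankF x hx
      simp only [Finset.mem_Icc]
      omega
    · rw [Finset.card_image_of_injOn hinj, hFcard, Nat.card_Icc]
      omega
  have hfilter : (F.filter (fun x => G x = k)).card = 1 := by
    rw [Finset.card_eq_one]
    have hk' : k ∈ F.image G := by rw [himage]; exact hk
    rcases Finset.mem_image.1 hk' with ⟨x, hx, hGx⟩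
    refine ⟨x, ?_⟩
    ext y
    simp only [Finset.mem_filter, Finset.mem_singleton]
    constructor
    · rintro ⟨hyF, hGy⟩
      exact hinj hyF hx (by rw [hGy, hGx])
    · rintro rfl; exact ⟨hx, hGx⟩
  have heq := aux_measure_eq ν hF1 hatom (fun x => G x = k)
  rw [show {x | min N (1 + ⌊(ν {y | f y < f x}).toReal * ↑N⌋₊) = k} = {x | G x = k} from rfl, heq,
    hfilter, Nat.cast_one, one_mul]

end AuxLemmas

/-- let `X` be a random variable in a standard Borel space whose conditional
law given a sub-σ-field `𝓕 = m` is a.s. the uniform distribution on a set of `N` points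
(`N ≥ 1` fixed), with regular version `(ν_ω)`. Then there exists a
`σ(X) ⊔ 𝓕`-measurable random variable `U` with values in `{1, …, N}`, independent of
`𝓕` and uniformly distributed on `{1, …, N}`. -/
theorem stmt_3 {Ω : Type*} {m0 : MeasurableSpace Ω} (P : Measure Ω)
    [IsProbabilityMeasure P]
    {E : Type*} [MeasurableSpace E] [StandardBorelSpace E]
    (X : Ω → E) (hXmeas : Measurable X)
    (m : MeasurableSpace Ω) (hm : m ≤ m0)
    (ν : Ω → Measure E) (hν_prob : ∀ ω, IsProbabilityMeasure (ν ω))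
    (hν_meas : ∀ s : Set E, MeasurableSet s → Measurable[m] fun ω => ν ω s)
    (hν : ∀ s : Set E, MeasurableSet s → ∀ A : Set Ω, MeasurableSet[m] A →
      ∫⁻ ω in A, ν ω s ∂P = P (A ∩ X ⁻¹' s))
    (N : ℕ) (hN : 1 ≤ N)
    (hunif : ∀ᵐ ω ∂P, ∃ F : Finset E, F.card = N ∧ ν ω ↑F = 1 ∧
      ∀ x ∈ F, ν ω {x} = (N : ℝ≥0∞)⁻¹) :
    ∃ U : Ω → ℕ,
      Measurable[MeasurableSpace.comap X inferInstance ⊔ m] U ∧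
      (∀ ω, U ω ∈ Finset.Icc 1 N) ∧
      Indep (MeasurableSpace.comap U inferInstance) m P ∧
      ∀ k ∈ Finset.Icc 1 N, P {ω | U ω = k} = (N : ℝ≥0∞)⁻¹ := by
  have h1 : MeasurableSingletonClass E := inferInstance
  obtain ⟨f, hf⟩ := MeasureTheory.exists_measurableEmbedding_real E
  letI mp : MeasurableSpace (Ω × E) := @Prod.instMeasurableSpace Ω E m _
  set κ : @Kernel Ω E m _ :=
    @Kernel.mk Ω E m _ ν ((@Measure.measurable_of_measurable_coe E Ω _ m ν hν_meas)) with hκ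
  haveI : @IsMarkovKernel Ω E m _ κ := ⟨fun ω => hν_prob ω⟩
  -- section measure function measurable
  have hsec : Measurable[mp] (fun p : Ω × E => ν p.1 {y | f y < f p.2}) := by
    set κ₂ : @Kernel (Ω × E) E mp _ :=
      @Kernel.mk (Ω × E) E mp _ (fun p => ν p.1)
        ((@Measure.measurable_of_measurable_coe E Ω _ m ν hν_meas).comp
          (@measurable_fst Ω E m _))
    have ht : MeasurableSet[@Prod.instMeasurableSpace (Ω × E) E mp _]
        {q : (Ω × E) × E | f q.2 < f q.1.2} := by
      have : Measurable[@Prod.instMeasurableSpace (Ω × E) E mp _]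
          (fun q : (Ω × E) × E => (f q.2, f q.1.2)) := by
        exact (hf.measurable.comp measurable_snd).prodMk
          (hf.measurable.comp (measurable_snd.comp measurable_fst))
      exact this measurableSet_lt'
    haveI : @IsMarkovKernel (Ω × E) E mp _ κ₂ := ⟨fun p => hν_prob p.1⟩
    exact @ProbabilityTheory.Kernel.measurable_kernel_prodMk_left (Ω × E) E mp _ κ₂
      (by infer_instance) _ ht
  -- the rank function
  set G : Ω × E → ℕ := fun p => min N (1 + ⌊(ν p.1 {y | f y < f p.2}).toReal * N⌋₊) with hGdef
  have hGmeas : Measurable[mp] G := by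
    have h2 : Measurable[mp] fun p : Ω × E => ⌊(ν p.1 {y | f y < f p.2}).toReal * (N : ℝ)⌋₊ :=
      (hsec.ennreal_toReal.mul_const _).nat_floor
    exact (measurable_from_top (f := fun n : ℕ => min N (1 + n))).comp h2
  set U : Ω → ℕ := fun ω => G (ω, X ω) with hUdef
  have hι : @Measurable Ω (Ω × E) (MeasurableSpace.comap X inferInstance ⊔ m) mp
      (fun ω => (ω, X ω)) := by
    apply Measurable.prodMk
    · exact (@measurable_id Ω m).mono le_sup_right le_rfl
    · exact measurable_iff_comap_le.2 le_sup_left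
  have hU : Measurable[MeasurableSpace.comap X inferInstance ⊔ m] U := hGmeas.comp hι
  have hUval : ∀ ω, U ω ∈ Finset.Icc 1 N := by
    intro ω
    simp only [hUdef, hGdef, Finset.mem_Icc]
    omega
  -- identification of the joint law
  set Pt := P.trim hm with hPt
  haveI : IsProbabilityMeasure Pt := ⟨by
    rw [hPt, trim_measurableSet_eq hm MeasurableSet.univ]; exact measure_univ⟩
  have hι0 : @Measurable Ω (Ω × E) m0 mp (fun ω => (ω, X ω)) := by
    apply Measurable.prodMk
    · exact (@measurable_id Ω m).mono hm le_rfl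
    · exact hXmeas
  set μmap : @Measure (Ω × E) mp := @Measure.map Ω (Ω × E) m0 mp (fun ω => (ω, X ω)) P with hμmap
  haveI : IsProbabilityMeasure μmap := by
    constructor
    rw [hμmap, Measure.map_apply hι0 MeasurableSet.univ, Set.preimage_univ]
    exact measure_univ
  have hmap : μmap = Pt.compProd κ := by
    refine @MeasureTheory.ext_of_generate_finite (Ω × E) mp μmap (Pt.compProd κ)
      (Set.image2 (· ×ˢ ·) {s : Set Ω | MeasurableSet[m] s} {t : Set E | MeasurableSet t})
      ?_ ?_ ?_ ?_ ?_
    · exact generateFrom_prod.symm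
    · exact isPiSystem_prod
    · infer_instance
    · rintro s ⟨A, hA, t, ht, rfl⟩
      simp only [Set.mem_setOf_eq] at hA ht
      rw [hμmap, Measure.map_apply hι0 ((hA.prod ht : MeasurableSet[mp] _)),
        Set.mk_preimage_prod, Measure.compProd_apply_prod hA ht, hPt,
        restrict_trim hm P hA, lintegral_trim hm (f := fun a => κ a t) (by exact hν_meas t ht)]
      exact (hν t ht A hA).symm
    · simp [measure_univ]
  -- a.e. evaluation of fiber masses (uses key_aux)
  have hae : ∀ k ∈ Finset.Icc 1 N, ∀ᵐ ω ∂P, ν ω {x | G (ω, x) = k} = (N : ℝ≥0∞)⁻¹ := by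
    intro k hk
    filter_upwards [hunif] with ω hω
    obtain ⟨F, hFcard, hF1, hatom⟩ := hω
    haveI := hν_prob ω
    exact key_aux (ν ω) f hf N hN F hFcard hF1 hatom k hk
  -- master computation
  have master : ∀ A : Set Ω, MeasurableSet[m] A → ∀ k ∈ Finset.Icc 1 N,
      P ({ω | U ω = k} ∩ A) = (N : ℝ≥0∞)⁻¹ * P A := by
    intro A hA k hk
    set T : Set (Ω × E) := {p | G p = k} ∩ A ×ˢ Set.univ with hT
    have hTmeas : MeasurableSet[mp] T :=
      (hGmeas (measurableSet_singleton k)).inter (hA.prod MeasurableSet.univ)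
    have hpre : {ω | U ω = k} ∩ A = (fun ω => (ω, X ω)) ⁻¹' T := by
      ext ω
      simp [hT, hUdef, Set.mem_preimage, Set.mem_prod]
    rw [hpre, ← Measure.map_apply hι0 hTmeas, ← hμmap, hmap, Measure.compProd_apply hTmeas]
    have hptw : ∀ ω, κ ω (Prod.mk ω ⁻¹' T) =
        A.indicator (fun ω => ν ω {x | G (ω, x) = k}) ω := by
      intro ω
      by_cases hωA : ω ∈ A
      · rw [Set.indicator_of_mem hωA]
        congr 1
        ext x
        simp [hT, hωA]
      · rw [Set.indicator_of_notMem hωA]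
        have : Prod.mk ω ⁻¹' T = ∅ := by
          ext x; simp [hT, hωA]
        rw [this]
        exact measure_empty
    have hmeask : Measurable[m] fun ω => κ ω (Prod.mk ω ⁻¹' ({p : Ω × E | G p = k})) :=
      Kernel.measurable_kernel_prodMk_left (κ := κ) (hGmeas (measurableSet_singleton k))
    rw [lintegral_congr hptw, lintegral_indicator hA, hPt, restrict_trim hm P hA,
      lintegral_trim hm (f := fun ω => ν ω {x | G (ω, x) = k}) (by exact hmeask)]
    have hcongr : ∫⁻ a in A, ν a {x | G (a, x) = k} ∂P = ∫⁻ _ in A, (N : ℝ≥0∞)⁻¹ ∂P :=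
      lintegral_congr_ae (ae_restrict_of_ae ((hae k hk).mono fun ω hω => hω))
    rw [hcongr, setLIntegral_const]
  -- conclusion
  refine ⟨U, hU, hUval, ?_, ?_⟩
  · rw [ProbabilityTheory.Indep_iff]
    intro t1 t2 ht1 ht2
    obtain ⟨B, -, rfl⟩ := ht1
    classical
    set K := (Finset.Icc 1 N).filter (· ∈ B) with hK
    have hdecomp : U ⁻¹' B = ⋃ k ∈ K, {ω | U ω = k} := by
      ext ω
      simp only [Set.mem_preimage, Set.mem_iUnion, hK, Finset.mem_filter, Set.mem_setOf_eq]
      constructor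
      · intro hB; exact ⟨U ω, ⟨hUval ω, hB⟩, rfl⟩
      · rintro ⟨k, ⟨-, hkB⟩, rfl⟩; exact hkB
    have hmeasUk : ∀ k : ℕ, MeasurableSet[m0] {ω | U ω = k} := by
      intro k
      exact (sup_le hXmeas.comap_le hm) _ (hU (measurableSet_singleton k))
    have hPB : ∀ A : Set Ω, MeasurableSet[m] A →
        P (U ⁻¹' B ∩ A) = K.card * ((N : ℝ≥0∞)⁻¹ * P A) := by
      intro A hA
      have hdisj : Set.PairwiseDisjoint (↑K : Set ℕ) (fun k => {ω | U ω = k} ∩ A) := by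
        intro i _ j _ hij
        refine Set.disjoint_left.2 ?_
        rintro ω ⟨hωi, -⟩ ⟨hωj, -⟩
        have h1 : U ω = i := hωi
        have h2 : U ω = j := hωj
        exact hij (h1.symm.trans h2)
      have hsum := measure_biUnion_finset (μ := P) hdisj
        (fun k _ => (hmeasUk k).inter (hm A hA))
      rw [hdecomp, Set.iUnion₂_inter, hsum,
        Finset.sum_congr rfl (fun k hk => master A hA k (Finset.mem_filter.1 hk).1),
        Finset.sum_const, nsmul_eq_mul]
    rw [hPB t2 ht2, ← Set.inter_univ (U ⁻¹' B), hPB Set.univ MeasurableSet.univ, measure_univ]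
    ring
  · intro k hk
    have h := master Set.univ MeasurableSet.univ k hk
    rw [Set.inter_univ] at h
    rw [h, measure_univ, mul_one]
end

section
/- Let $E$ be a countable set with transition kernel $\Pi$ defined by $\Pi(x,\cdot)=\mathrm{law}(f(x,V_1))$, where the $V_n$ are i.i.d. of law $\beta$. If there exist $l\in\mathbf{N}^*$ and $c\in E$ such that $P[f_{V_l}\circ\cdots\circ f_{V_1}\equiv c]>0$ (the random composition is the constant map $c$ with positive probability), then for every Markov chain $(X_n)_{n\in\mathbf{Z}}$ governed by $X_{n+1}=f(X_n,V_{n+1})$ with $V_{n+1}$ independent of $((X_k,V_k))_{k\le n}$, one has $\mathcal{F}_n^X\subset\mathcal{F}_n^V$ for every $n\in\mathbf{Z}$ (i.e., each $X_n$ is a.s. a measurable function of $(V_k)_{k\le n}$). -/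
open MeasureTheory ProbabilityTheory
open scoped ENNReal

section Stmt5Aux

variable {E G α : Type*} [MeasurableSpace E] [MeasurableSingletonClass E]
  [Countable E] [MeasurableSpace G] [MeasurableSpace α]

lemma stmt5_meas_comp (f : E → G → E) (hf : ∀ x, Measurable (f x))
    {g : α → E} (hg : Measurable g) {h : α → G} (hh : Measurable h) :
    Measurable fun a => f (g a) (h a) := by
  apply measurable_to_countable'
  intro e
  have : (fun a => f (g a) (h a)) ⁻¹' {e}
      = ⋃ y : E, (g ⁻¹' {y} ∩ h ⁻¹' (f y ⁻¹' {e})) := by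
    ext a
    simp only [Set.mem_preimage, Set.mem_singleton_iff, Set.mem_iUnion, Set.mem_inter_iff]
    exact ⟨fun H => ⟨g a, rfl, H⟩, fun ⟨y, hy, H⟩ => by rw [hy]; exact H⟩
  rw [this]
  exact MeasurableSet.iUnion fun y =>
    (hg (measurableSet_singleton y)).inter (hh (hf y (measurableSet_singleton e)))

lemma stmt5_meas_foldl (f : E → G → E) (hf : ∀ x, Measurable (f x)) :
    ∀ {m : ℕ} (h : Fin m → α → G), (∀ i, Measurable (h i)) →
    ∀ {g₀ : α → E}, Measurable g₀ →
    Measurable fun a => (List.ofFn fun i => h i a).foldl f (g₀ a) := by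
  intro m
  induction m with
  | zero =>
    intro h _ g₀ hg
    simpa using hg
  | succ m ih =>
    intro h hh g₀ hg
    have heq : (fun a => (List.ofFn fun i : Fin (m + 1) => h i a).foldl f (g₀ a))
        = fun a => (List.ofFn fun i : Fin m => h i.succ a).foldl f (f (g₀ a) (h 0 a)) := by
      funext a
      rw [List.ofFn_succ, List.foldl_cons]
    rw [heq]
    exact ih _ (fun i => hh i.succ) (stmt5_meas_comp f hf hg (hh 0))

end Stmt5Aux

/-- Rosenblatt's sufficient condition: let `E` be countable and
`X_{n+1} = f(X_n, V_{n+1})` a Markov chain indexed by `ℤ`, where the `V_n` are i.i.d.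
of law `β` and `V_{n+1}` is independent of `((X_k, V_k))_{k ≤ n}`. If some composition
`f_{V_l} ∘ ⋯ ∘ f_{V_1}` is the constant map `c` with positive probability, then
`𝓕_n^X ⊆ 𝓕_n^V` for every `n`: each `X_n` is a.s. a measurable function of
`(V_k)_{k ≤ n}`. -/
theorem stmt_5 {E G : Type*} [MeasurableSpace E] [MeasurableSingletonClass E]
    [Countable E] [MeasurableSpace G]
    (f : E → G → E) (hf : ∀ x, Measurable (f x))
    (β : Measure G) [IsProbabilityMeasure β]
    {Ω : Type*} [MeasurableSpace Ω] (P : Measure Ω) [IsProbabilityMeasure P]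
    (X : ℤ → Ω → E) (V : ℤ → Ω → G)
    (hX : ∀ n, Measurable (X n)) (hV : ∀ n, Measurable (V n))
    (hiid_indep : iIndepFun V P)
    (hiid_law : ∀ n, Measure.map (V n) P = β)
    (hindep : ∀ n : ℤ,
      Indep (MeasurableSpace.comap (V (n + 1)) inferInstance)
        (⨆ k : ℤ, ⨆ _ : k ≤ n,
          MeasurableSpace.comap (X k) inferInstance ⊔
            MeasurableSpace.comap (V k) inferInstance) P)
    (hrec : ∀ n : ℤ, ∀ ω, X (n + 1) ω = f (X n ω) (V (n + 1) ω))
    (hRosenblatt : ∃ l : ℕ, 0 < l ∧ ∃ c : E,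
      0 < P {ω | ∀ x : E,
        (List.ofFn fun i : Fin l => V ((i : ℕ) + 1 : ℤ) ω).foldl f x = c}) :
    ∀ n : ℤ, ∃ g : ({k : ℤ // k ≤ n} → G) → E, Measurable g ∧
      ∀ᵐ ω ∂P, X n ω = g fun k => V k.val ω := by
  classical
  intro n
  obtain ⟨l, hl, c, hpos⟩ := hRosenblatt
  -- recursion lemma
  have Xshift : ∀ (j : ℕ) (m : ℤ) (ω : Ω), X (m + j) ω
      = (List.ofFn fun i : Fin j => V (m + i + 1) ω).foldl f (X m ω) := by
    intro j
    induction j with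
    | zero => intro m ω; simp
    | succ j ih =>
      intro m ω
      have h0 : (m + (j + 1 : ℕ) : ℤ) = (m + 1) + (j : ℕ) := by push_cast; ring
      rw [h0, ih (m + 1) ω, List.ofFn_succ, List.foldl_cons, hrec m ω]
      congr 1
      · congr 1
        norm_num
      · apply congrArg List.ofFn
        funext i
        congr 1
        simp [Fin.val_succ]
        push_cast
        ring
  -- the collapsing set
  set Sset : Set (Fin l → G) := {v | ∀ x : E, (List.ofFn v).foldl f x = c} with hSset_def
  have hSset : MeasurableSet Sset := by
    have : Sset = ⋂ x : E,
        (fun v : Fin l → G => (List.ofFn fun i => v i).foldl f x) ⁻¹' {c} := by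
      ext v; simp [hSset_def]
    rw [this]
    exact MeasurableSet.iInter fun x =>
      (stmt5_meas_foldl f hf _ (fun i => measurable_pi_apply i) measurable_const)
        (measurableSet_singleton c)
  have htuple_meas : ∀ m : ℤ, Measurable fun ω (i : Fin l) => V (m + i + 1) ω :=
    fun m => measurable_pi_lambda _ fun i => hV _
  -- law of each block
  have hmap : ∀ m : ℤ, Measure.map (fun ω (i : Fin l) => V (m + i + 1) ω) P
      = Measure.pi (fun _ : Fin l => β) := by
    intro m
    refine (Measure.pi_eq ?_).symm
    intro s hs
    rw [Measure.map_apply (htuple_meas m) (MeasurableSet.univ_pi hs)]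
    have hpre : (fun ω (i : Fin l) => V (m + i + 1) ω) ⁻¹' Set.pi Set.univ s
        = ⋂ i : Fin l, V (m + i + 1) ⁻¹' s i := by
      ext ω; simp [Set.mem_pi]
    rw [hpre]
    have hσ : Function.Injective (fun i : Fin l => m + (i : ℤ) + 1) := by
      intro a b hab
      simp only [add_left_inj, add_right_inj] at hab
      exact Fin.val_injective (by exact_mod_cast hab)
    set sets : ℤ → Set G := fun j => ⋃ (i : Fin l) (_ : m + (i : ℤ) + 1 = j), s i with hsetsdef
    have hsets_eq : ∀ i : Fin l, sets (m + (i : ℤ) + 1) = s i := by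
      intro i; ext g
      simp only [hsetsdef, Set.mem_iUnion]
      constructor
      · rintro ⟨i', hi', hg⟩
        rwa [hσ hi'] at hg
      · intro hg; exact ⟨i, rfl, hg⟩
    have hsets_meas : ∀ j ∈ Finset.image (fun i : Fin l => m + (i : ℤ) + 1) Finset.univ,
        MeasurableSet (sets j) :=
      fun j _ => MeasurableSet.iUnion fun i => MeasurableSet.iUnion fun _ => hs i
    have hmul := hiid_indep.measure_inter_preimage_eq_mul
      (Finset.image (fun i : Fin l => m + (i : ℤ) + 1) Finset.univ) hsets_meas
    have h1 : (⋂ j ∈ Finset.image (fun i : Fin l => m + (i : ℤ) + 1) Finset.univ,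
        V j ⁻¹' sets j) = ⋂ i : Fin l, V (m + i + 1) ⁻¹' s i := by
      ext ω
      simp only [Set.mem_iInter, Finset.mem_image, Finset.mem_univ, true_and]
      constructor
      · intro H i
        have := H (m + (i : ℤ) + 1) ⟨i, rfl⟩
        rwa [hsets_eq i] at this
      · rintro H j ⟨i, rfl⟩
        rw [hsets_eq i]; exact H i
    have h2 : ∏ j ∈ Finset.image (fun i : Fin l => m + (i : ℤ) + 1) Finset.univ,
        P (V j ⁻¹' sets j) = ∏ i : Fin l, β (s i) := by
      rw [Finset.prod_image (fun a _ b _ h => hσ h)]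
      refine Finset.prod_congr rfl fun i _ => ?_
      rw [hsets_eq i, ← Measure.map_apply (hV _) (hs i), hiid_law]
    rw [h1, h2] at hmul
    exact hmul
  -- blocks
  set mk : ℕ → ℤ := fun k => n - (l : ℤ) * k - l with hmk_def
  set A : ℕ → Set Ω := fun k => (fun ω (i : Fin l) => V (mk k + i + 1) ω) ⁻¹' Sset with hA_def
  set p : ℝ≥0∞ := (Measure.pi fun _ : Fin l => β) Sset with hp_def
  have hPA : ∀ k, P (A k) = p := by
    intro k
    rw [hA_def]
    rw [← Measure.map_apply (htuple_meas (mk k)) hSset, hmap (mk k), hp_def]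
  have hppos : 0 < p := by
    have h0 : {ω | ∀ x : E,
        (List.ofFn fun i : Fin l => V ((i : ℕ) + 1 : ℤ) ω).foldl f x = c}
        = (fun ω (i : Fin l) => V ((0 : ℤ) + i + 1) ω) ⁻¹' Sset := by
      ext ω
      simp only [Set.mem_setOf_eq, Set.mem_preimage, hSset_def]
      constructor
      · intro H x
        have : (fun i : Fin l => V ((0 : ℤ) + i + 1) ω)
            = fun i : Fin l => V ((i : ℕ) + 1 : ℤ) ω := by
          funext i; norm_num
        rw [this]; exact H x
      · intro H x
        have : (fun i : Fin l => V ((i : ℕ) + 1 : ℤ) ω)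
            = fun i : Fin l => V ((0 : ℤ) + i + 1) ω := by
          funext i; norm_num
        rw [this]; exact H x
    rw [h0] at hpos
    rwa [← Measure.map_apply (htuple_meas 0) hSset, hmap 0, ← hp_def] at hpos
  -- measurability of A k w.r.t. sub-σ-algebras
  have hAmeas' : ∀ (k : ℕ) (𝔪 : MeasurableSpace Ω),
      (∀ i : Fin l, MeasurableSpace.comap (V (mk k + i + 1)) inferInstance ≤ 𝔪) →
      MeasurableSet[𝔪] (A k) := by
    intro k 𝔪 h𝔪
    have hVm : ∀ i : Fin l, Measurable[𝔪] (V (mk k + i + 1)) :=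
      fun i => Measurable.of_comap_le (h𝔪 i)
    have hAk : A k = ⋂ x : E,
        (fun ω => (List.ofFn fun i : Fin l => V (mk k + i + 1) ω).foldl f x) ⁻¹' {c} := by
      ext ω; simp [hA_def, hSset_def]
    rw [hAk]
    refine MeasurableSet.iInter fun x => ?_
    exact (@stmt5_meas_foldl E G Ω _ _ _ _ 𝔪 f hf l
      (fun i ω => V (mk k + i + 1) ω) hVm (fun _ => x)
      (@measurable_const E Ω _ 𝔪 x)) (measurableSet_singleton c)
  have hAmeas : ∀ k, MeasurableSet (A k) :=
    fun k => hAmeas' k _ (fun i => (hV _).comap_le)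
  -- independence induction
  have hstep : ∀ K : ℕ, P (⋂ k ∈ Finset.range (K + 1), (A k)ᶜ)
      = P (⋂ k ∈ Finset.range K, (A k)ᶜ) * (1 - p) := by
    intro K
    have hiI : iIndep (fun j : ℤ => MeasurableSpace.comap (V j) inferInstance) P :=
      (iIndepFun_iff_iIndep _ _ _).1 hiid_indep
    have hdisj : Disjoint {j : ℤ | n - (l : ℤ) * K < j} {j : ℤ | j ≤ n - (l : ℤ) * K} := by
      rw [Set.disjoint_left]
      intro j hj hj'
      simp only [Set.mem_setOf_eq] at hj hj'
      omega
    have hIndep := indep_iSup_of_disjoint (fun j => (hV j).comap_le) hiI hdisj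
    have hmemL : MeasurableSet[⨆ j ∈ {j : ℤ | n - (l : ℤ) * K < j},
        MeasurableSpace.comap (V j) inferInstance] (⋂ k ∈ Finset.range K, (A k)ᶜ) := by
      refine MeasurableSet.iInter fun k => MeasurableSet.iInter fun hk => ?_
      refine MeasurableSet.compl ?_
      refine hAmeas' k _ fun i => ?_
      refine le_trans le_rfl (le_iSup₂ (f := fun j _ => MeasurableSpace.comap (V j)
        inferInstance) (mk k + i + 1) ?_)
      have hkK : k < K := Finset.mem_range.1 hk
      have hiL : (i : ℤ) < l := by exact_mod_cast i.isLt
      have h1 : (l : ℤ) * k + l ≤ (l : ℤ) * K := by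
        have h2 : ((k : ℤ) + 1) ≤ K := by exact_mod_cast hkK
        have hl0 : (0 : ℤ) ≤ l := by positivity
        nlinarith
      show n - (l : ℤ) * K < mk k + i + 1
      simp only [hmk_def]
      have hi0 : (0 : ℤ) ≤ (i : ℤ) := by positivity
      linarith
    have hmemR : MeasurableSet[⨆ j ∈ {j : ℤ | j ≤ n - (l : ℤ) * K},
        MeasurableSpace.comap (V j) inferInstance] ((A K)ᶜ) := by
      refine MeasurableSet.compl ?_
      refine hAmeas' K _ fun i => ?_
      refine le_trans le_rfl (le_iSup₂ (f := fun j _ => MeasurableSpace.comap (V j)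
        inferInstance) (mk K + i + 1) ?_)
      have hiL : (i : ℤ) < l := by exact_mod_cast i.isLt
      show mk K + i + 1 ≤ n - (l : ℤ) * K
      simp only [hmk_def]
      omega
    have hsplit : (⋂ k ∈ Finset.range (K + 1), (A k)ᶜ)
        = (⋂ k ∈ Finset.range K, (A k)ᶜ) ∩ (A K)ᶜ := by
      rw [Finset.range_add_one]
      rw [Finset.set_biInter_insert]
      rw [Set.inter_comm]
    rw [hsplit]
    rw [(Indep_iff _ _ P).1 hIndep _ _ hmemL hmemR]
    congr 1
    rw [prob_compl_eq_one_sub (hAmeas K), hPA K]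
  have hTbound : ∀ K : ℕ, P (⋂ k ∈ Finset.range K, (A k)ᶜ) = (1 - p) ^ K := by
    intro K
    induction K with
    | zero => simp
    | succ K ih => rw [hstep K, ih, pow_succ]
  have hCzero : P (⋂ k : ℕ, (A k)ᶜ) = 0 := by
    have hple : ∀ K : ℕ, P (⋂ k : ℕ, (A k)ᶜ) ≤ (1 - p) ^ K := by
      intro K
      rw [← hTbound K]
      refine measure_mono ?_
      intro ω hω
      simp only [Set.mem_iInter] at hω ⊢
      exact fun k _ => hω k
    have hlt1 : (1 : ℝ≥0∞) - p < 1 :=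
      ENNReal.sub_lt_self ENNReal.one_ne_top one_ne_zero (ne_of_gt hppos)
    have hlim := ENNReal.tendsto_pow_atTop_nhds_zero_of_lt_one hlt1
    have := ge_of_tendsto' hlim hple
    exact le_antisymm this (zero_le)
  -- the key deterministic fact
  have key : ∀ (k : ℕ) (ω : Ω), ω ∈ A k →
      X n ω = (List.ofFn fun i : Fin (l * k) =>
        V (n - ((l * k : ℕ) : ℤ) + i + 1) ω).foldl f c := by
    intro k ω hω
    have hc : X (n - ((l * k : ℕ) : ℤ)) ω = c := by
      have h2 : (n - ((l * k : ℕ) : ℤ)) = mk k + (l : ℕ) := by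
        simp only [hmk_def]; push_cast; ring
      rw [h2, Xshift l (mk k) ω]
      exact hω (X (mk k) ω)
    have h3 : n = (n - ((l * k : ℕ) : ℤ)) + ((l * k : ℕ) : ℤ) := by ring
    calc X n ω = X ((n - ((l * k : ℕ) : ℤ)) + ((l * k : ℕ) : ℤ)) ω := by rw [← h3]
      _ = (List.ofFn fun i : Fin (l * k) =>
          V (n - ((l * k : ℕ) : ℤ) + i + 1) ω).foldl f (X (n - ((l * k : ℕ) : ℤ)) ω) :=
        Xshift (l * k) _ ω
      _ = _ := by rw [hc]
  -- index bounds
  have hidxA : ∀ (k : ℕ) (i : Fin l), mk k + (i : ℤ) + 1 ≤ n := by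
    intro k i
    have hiL : (i : ℤ) < l := by exact_mod_cast i.isLt
    have h2 : (0 : ℤ) ≤ (l : ℤ) * k := by positivity
    simp only [hmk_def]
    omega
  have hidxF : ∀ (k : ℕ) (i : Fin (l * k)), n - ((l * k : ℕ) : ℤ) + (i : ℤ) + 1 ≤ n := by
    intro k i
    have hiL : (i : ℤ) < ((l * k : ℕ) : ℤ) := by exact_mod_cast i.isLt
    omega
  -- construction of g
  set A' : ℕ → ({k : ℤ // k ≤ n} → G) → Prop := fun k v => ∀ x : E,
    (List.ofFn fun i : Fin l => v ⟨mk k + i + 1, hidxA k i⟩).foldl f x = c with hA'_def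
  set F : ℕ → ({k : ℤ // k ≤ n} → G) → E := fun k v =>
    (List.ofFn fun i : Fin (l * k) =>
      v ⟨n - ((l * k : ℕ) : ℤ) + i + 1, hidxF k i⟩).foldl f c with hF_def
  set p' : ℕ → ({k : ℤ // k ≤ n} → G) → Prop :=
    fun k v => A' k v ∨ ∀ j, ¬ A' j v with hp'_def
  have htot : ∀ v, ∃ k, p' k v := by
    intro v
    by_cases h : ∃ j, A' j v
    · exact ⟨h.choose, Or.inl h.choose_spec⟩
    · exact ⟨0, Or.inr fun j hj => h ⟨j, hj⟩⟩
  have hA'meas : ∀ k, MeasurableSet {v | A' k v} := by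
    intro k
    have : {v : ({k : ℤ // k ≤ n} → G) | A' k v} = ⋂ x : E,
        (fun v : ({k : ℤ // k ≤ n} → G) =>
          (List.ofFn fun i : Fin l => v ⟨mk k + i + 1, hidxA k i⟩).foldl f x) ⁻¹' {c} := by
      ext v; simp [hA'_def]
    rw [this]
    exact MeasurableSet.iInter fun x =>
      (stmt5_meas_foldl f hf _ (fun i => measurable_pi_apply _) measurable_const)
        (measurableSet_singleton c)
  have hFmeas : ∀ k, Measurable (F k) := by
    intro k
    rw [hF_def]
    exact stmt5_meas_foldl f hf _ (fun i => measurable_pi_apply _) measurable_const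
  refine ⟨fun v => F (Nat.find (htot v)) v, ?_, ?_⟩
  · refine Measurable.find hFmeas (fun k => ?_) htot
    have : {v | p' k v} = {v | A' k v} ∪ ⋂ j, {v | A' j v}ᶜ := by
      ext v; simp [hp'_def]
    rw [this]
    exact (hA'meas k).union (MeasurableSet.iInter fun j => (hA'meas j).compl)
  · have hGood : ∀ᵐ ω ∂P, ∃ k, ω ∈ A k := by
      rw [ae_iff]
      have : {ω | ¬ ∃ k, ω ∈ A k} = ⋂ k : ℕ, (A k)ᶜ := by
        ext ω; simp
      rw [this]
      exact hCzero
    filter_upwards [hGood] with ω hω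
    have hex : ∃ j, A' j (fun k => V k.val ω) := by
      obtain ⟨k, hk⟩ := hω
      exact ⟨k, hk⟩
    have hspec := Nat.find_spec (htot (fun k : {k : ℤ // k ≤ n} => V k.val ω))
    rcases hspec with hA'k | hnone
    · exact key _ ω hA'k
    · exact absurd hex (by simpa using hnone)
end

section
/- Let $E$ be countable and $\Pi_2$ the kernel on $E^2$ given by $\Pi_2((x,y),\cdot)=\mathrm{law}(f(x,V_1),f(y,V_1))$. If every pair of states $x,y\in E$ is accordable (i.e., the diagonal $D$ is accessible from $(x,y)$ under $\Pi_2$), then every stationary Markov chain for $\Pi_2$ lives on the diagonal: $P[(X_n,Y_n)\in D]=1$ for all $n$. -/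
open MeasureTheory ProbabilityTheory
open scoped ENNReal

/-- Two states are accordable if some random composition `f_{V_l} ∘ ⋯ ∘ f_{V_1}`
merges them with positive probability (the `V_i` being i.i.d. of law `β`);
equivalently, the diagonal is accessible from `(x, y)` for the pair kernel `Π₂`. -/
def AccordableStates {E G : Type*} [MeasurableSpace G]
    (f : E → G → E) (β : Measure G) (x y : E) : Prop :=
  ∃ l : ℕ, 0 < l ∧
    0 < Measure.pi (fun _ : Fin l => β)
      {v : Fin l → G |
        (List.ofFn v).foldl f x = (List.ofFn v).foldl f y}

section Aux

variable {E G : Type*} [MeasurableSpace E] [MeasurableSingletonClass E] [Countable E]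
  [MeasurableSpace G]

/-- One step of the pair chain. -/
def stepPair (f : E → G → E) (p : E × E) (g : G) : E × E := (f p.1 g, f p.2 g)

/-- One-step transition probabilities of the pair chain. -/
noncomputable def kfun (f : E → G → E) (β : Measure G) (p q : E × E) : ℝ≥0∞ :=
  β {g | stepPair f p g = q}

open scoped Classical in
/-- `l`-step transition probabilities of the pair chain. -/
noncomputable def Kit (f : E → G → E) (β : Measure G) : ℕ → E × E → E × E → ℝ≥0∞
  | 0 => fun p q => if q = p then 1 else 0
  | (l + 1) => fun p q => ∑' r : E × E, kfun f β p r * Kit f β l r q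

variable {f : E → G → E} (hf : ∀ x, Measurable (f x)) {β : Measure G}
include hf

lemma stepPair_meas_set (p q : E × E) : MeasurableSet {g | stepPair f p g = q} := by
  have : {g | stepPair f p g = q} = (f p.1 ⁻¹' {q.1}) ∩ (f p.2 ⁻¹' {q.2}) := by
    ext g; simp [stepPair, Prod.ext_iff]
  rw [this]
  exact ((hf p.1 (measurableSet_singleton _)).inter (hf p.2 (measurableSet_singleton _)))

lemma ksum [IsProbabilityMeasure β] (p : E × E) : ∑' q : E × E, kfun f β p q = 1 := by
  have hU : ⋃ q : E × E, {g | stepPair f p g = q} = Set.univ := by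
    ext g; simp
  have := measure_iUnion (μ := β) (f := fun q : E × E => {g | stepPair f p g = q})
    (fun q r hqr => by
      simp only [Function.onFun, Set.disjoint_left, Set.mem_setOf_eq]
      intro g hg hg'
      exact hqr (hg.symm.trans hg'))
    (fun q => stepPair_meas_set hf p q)
  rw [hU] at this
  simp only [kfun]
  rw [← this, measure_univ]

lemma Ksum [IsProbabilityMeasure β] (l : ℕ) (p : E × E) : ∑' q : E × E, Kit f β l p q = 1 := by
  induction l generalizing p with
  | zero => simp [Kit]
  | succ l ih =>
    simp only [Kit]
    rw [ENNReal.tsum_comm]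
    calc ∑' r : E × E, ∑' q : E × E, kfun f β p r * Kit f β l r q
        = ∑' r : E × E, kfun f β p r * ∑' q : E × E, Kit f β l r q := by
          congr 1; ext r; rw [ENNReal.tsum_mul_left]
      _ = ∑' r : E × E, kfun f β p r := by simp [ih]
      _ = 1 := ksum hf p

lemma Kdiag (l : ℕ) (p q : E × E) (hp : p.1 = p.2) (hq : q.1 ≠ q.2) :
    Kit f β l p q = 0 := by
  induction l generalizing p with
  | zero =>
    have hne : q ≠ p := fun h => by subst h; exact hq hp
    simp [Kit, hne]
  | succ l ih =>
    simp only [Kit]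
    refine ENNReal.tsum_eq_zero.2 fun r => ?_
    by_cases hr : r.1 = r.2
    · rw [ih r hr, mul_zero]
    · have he : {g | stepPair f p g = r} = ∅ := by
        ext g
        simp only [Set.mem_setOf_eq, Set.mem_empty_iff_false, iff_false]
        intro h
        apply hr
        rw [← h]
        simp only [stepPair]
        rw [hp]
      rw [kfun, he, measure_empty, zero_mul]

/-- Measurability of the `l`-fold folded map. -/
lemma foldl_measurable : ∀ (l : ℕ) (x : E),
    Measurable (fun v : Fin l → G => (List.ofFn v).foldl f x) := by
  intro l
  induction l with
  | zero =>
    intro x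
    have : (fun v : Fin 0 → G => (List.ofFn v).foldl f x) = fun _ => x := by
      funext v; simp
    rw [this]; exact measurable_const
  | succ l ih =>
    intro x
    apply measurable_to_countable'
    intro z
    have hset : (fun v : Fin (l + 1) → G => (List.ofFn v).foldl f x) ⁻¹' {z} =
        ⋃ u : E, ((fun v : Fin (l + 1) → G => v 0) ⁻¹' (f x ⁻¹' {u})) ∩
          ((fun v : Fin (l + 1) → G => fun i : Fin l => v i.succ) ⁻¹'
            ((fun w : Fin l → G => (List.ofFn w).foldl f u) ⁻¹' {z})) := by
      ext v
      simp only [Set.mem_preimage, Set.mem_singleton_iff, Set.mem_iUnion, Set.mem_inter_iff,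
        List.ofFn_succ, List.foldl_cons]
      constructor
      · intro h; exact ⟨f x (v 0), rfl, h⟩
      · rintro ⟨u, hu, h⟩; rw [hu]; exact h
    rw [hset]
    refine MeasurableSet.iUnion fun u => MeasurableSet.inter ?_ ?_
    · exact (measurable_pi_apply 0) ((hf x) (measurableSet_singleton u))
    · exact (measurable_pi_lambda _ fun i => measurable_pi_apply _)
        ((ih u) (measurableSet_singleton z))

lemma pairFoldl_meas_set (l : ℕ) (p q : E × E) :
    MeasurableSet {v : Fin l → G |
      ((List.ofFn v).foldl f p.1, (List.ofFn v).foldl f p.2) = q} := by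
  have : {v : Fin l → G | ((List.ofFn v).foldl f p.1, (List.ofFn v).foldl f p.2) = q} =
      ((fun v : Fin l → G => (List.ofFn v).foldl f p.1) ⁻¹' {q.1}) ∩
      ((fun v : Fin l → G => (List.ofFn v).foldl f p.2) ⁻¹' {q.2}) := by
    ext v; simp [Prod.ext_iff]
  rw [this]
  exact ((foldl_measurable hf l p.1) (measurableSet_singleton _)).inter
    ((foldl_measurable hf l p.2) (measurableSet_singleton _))

/-- The `l`-fold product measure of the merge event equals the `l`-step kernel. -/
lemma pi_foldl_eq [IsProbabilityMeasure β] : ∀ (l : ℕ) (p q : E × E),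
    Measure.pi (fun _ : Fin l => β)
      {v : Fin l → G | ((List.ofFn v).foldl f p.1, (List.ofFn v).foldl f p.2) = q} =
    Kit f β l p q := by
  intro l
  induction l with
  | zero =>
    intro p q
    by_cases h : q = p
    · subst h
      have : {v : Fin 0 → G | ((List.ofFn v).foldl f q.1, (List.ofFn v).foldl f q.2) = q}
          = Set.univ := by
        ext v; simp
      rw [this, Kit]
      simp
    · have : {v : Fin 0 → G | ((List.ofFn v).foldl f p.1, (List.ofFn v).foldl f p.2) = q}
          = ∅ := by
        ext v
        simp only [List.ofFn_zero, List.foldl_nil, Set.mem_setOf_eq, Set.mem_empty_iff_false,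
          iff_false]
        intro hc
        exact h (hc.symm)
      rw [this, Kit]
      simp [h]
  | succ l ih =>
    intro p q
    set A := {v : Fin (l + 1) → G |
      ((List.ofFn v).foldl f p.1, (List.ofFn v).foldl f p.2) = q} with hA
    set e := MeasurableEquiv.piFinSuccAbove (fun _ : Fin (l + 1) => G) 0 with he
    have hpres := measurePreserving_piFinSuccAbove (fun _ : Fin (l + 1) => β) 0
    set B := e.symm ⁻¹' A with hB
    have hAB : e ⁻¹' B = A := by
      simp [hB, Set.preimage_preimage]
    have hBmeas : MeasurableSet B :=
      e.symm.measurable (pairFoldl_meas_set hf (l + 1) p q)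
    have h1 : Measure.pi (fun _ : Fin (l + 1) => β) A =
        (β.prod (Measure.pi fun _ : Fin l => β)) B := by
      rw [← hAB]
      exact hpres.measure_preimage hBmeas.nullMeasurableSet
    have hBdesc : ∀ g : G, ∀ w : Fin l → G, ((g, w) ∈ B ↔
        ((List.ofFn w).foldl f (f p.1 g), (List.ofFn w).foldl f (f p.2 g)) = q) := by
      intro g w
      have hsymm : e.symm (g, w) = Fin.cons g w := by
        simp [he, MeasurableEquiv.piFinSuccAbove, Fin.insertNthEquiv, Fin.insertNth_zero']
      simp only [hB, Set.mem_preimage, hA, Set.mem_setOf_eq, hsymm]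
      simp [List.ofFn_succ]
    have h2 : (β.prod (Measure.pi fun _ : Fin l => β)) B =
        ∫⁻ g, (Measure.pi fun _ : Fin l => β) {w | (g, w) ∈ B} ∂β :=
      Measure.prod_apply hBmeas
    have h3 : ∀ g : G, (Measure.pi fun _ : Fin l => β) {w | (g, w) ∈ B} =
        Kit f β l (stepPair f p g) q := by
      intro g
      have : {w : Fin l → G | (g, w) ∈ B} = {w : Fin l → G |
          ((List.ofFn w).foldl f (stepPair f p g).1,
           (List.ofFn w).foldl f (stepPair f p g).2) = q} := by
        ext w; rw [Set.mem_setOf_eq, hBdesc g w]; rfl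
      rw [this, ih]
    have h4 : ∫⁻ g, Kit f β l (stepPair f p g) q ∂β =
        ∑' r : E × E, kfun f β p r * Kit f β l r q := by
      have hfun : (fun g => Kit f β l (stepPair f p g) q) =
          fun g => ∑' r : E × E,
            Set.indicator {g' | stepPair f p g' = r} (fun _ => Kit f β l r q) g := by
        funext g
        rw [tsum_eq_single (stepPair f p g) (fun r hr => by
          rw [Set.indicator_of_notMem]
          simp only [Set.mem_setOf_eq]
          exact fun hc => hr (hc ▸ rfl))]
        rw [Set.indicator_of_mem (by simp : g ∈ {g' | stepPair f p g' = stepPair f p g})]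
      rw [hfun, lintegral_tsum (fun r => ((measurable_const.indicator
        (stepPair_meas_set hf p r)).aemeasurable))]
      congr 1; ext r
      rw [lintegral_indicator_const (stepPair_meas_set hf p r), kfun, mul_comm]
    calc Measure.pi (fun _ : Fin (l + 1) => β) A
        = ∫⁻ g, Kit f β l (stepPair f p g) q ∂β := by
          rw [h1, h2]; exact lintegral_congr fun g => h3 g
      _ = ∑' r : E × E, kfun f β p r * Kit f β l r q := h4
      _ = Kit f β (l + 1) p q := rfl

end Aux


/-- if every pair of states of the countable set `E` is accordable, then
every stationary Markov chain `(X_n, Y_n)` for the pair kernel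
`Π₂((x,y),·) = law (f x V₁, f y V₁)` lives on the diagonal. -/
theorem stmt_6 {E G : Type*} [MeasurableSpace E] [MeasurableSingletonClass E]
    [Countable E] [MeasurableSpace G]
    (f : E → G → E) (hf : ∀ x, Measurable (f x))
    (β : Measure G) [IsProbabilityMeasure β]
    (hacc : ∀ x y : E, AccordableStates f β x y)
    {Ω : Type*} [MeasurableSpace Ω] (P : Measure Ω) [IsProbabilityMeasure P]
    (Z : ℤ → Ω → E × E) (hZmeas : ∀ n, Measurable (Z n))
    (α : Measure (E × E))
    (hstat : ∀ n : ℤ, Measure.map (Z n) P = α)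
    (hMarkov : ∀ n : ℤ, ∀ q : E × E,
      P[(Set.indicator {ω | Z (n + 1) ω = q} fun _ => (1 : ℝ)) |
          ⨆ k : ℤ, ⨆ _ : k ≤ n, MeasurableSpace.comap (Z k) inferInstance]
        =ᵐ[P] fun ω =>
          ((Measure.map (fun v => (f (Z n ω).1 v, f (Z n ω).2 v)) β) {q}).toReal) :
    ∀ n : ℤ, P {ω | (Z n ω).1 = (Z n ω).2} = 1 := by
  classical
  -- α is a probability measure
  have hαuniv : α Set.univ = 1 := by
    rw [← hstat 0, Measure.map_apply (hZmeas 0) MeasurableSet.univ]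
    simp
  have hαprob : IsProbabilityMeasure α := ⟨hαuniv⟩
  -- the diagonal
  set D : Set (E × E) := {p | p.1 = p.2} with hD
  have hDmeas : MeasurableSet D := by
    have : D = ⋃ z : E, {((z, z) : E × E)} := by
      ext p
      simp only [hD, Set.mem_setOf_eq, Set.mem_iUnion, Set.mem_singleton_iff, Prod.ext_iff]
      constructor
      · intro h; exact ⟨p.1, rfl, h.symm⟩
      · rintro ⟨z, h1, h2⟩; rw [h1, h2]
    rw [this]
    exact MeasurableSet.iUnion fun z => measurableSet_singleton _
  -- the total mass of α as a sum over singletons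
  have hsingU : ∀ (s : Set (E × E)), MeasurableSet s → α s = ∑' w : s, α {(w : E × E)} := by
    intro s _
    have hU : (⋃ w : s, {(w : E × E)}) = s := by
      ext p; simp
    have h := measure_iUnion (μ := α) (f := fun w : s => ({(w : E × E)} : Set (E × E)))
      (fun v w hvw => by
        simp only [Function.onFun, Set.disjoint_left, Set.mem_singleton_iff]
        intro p h1 h2
        exact hvw (Subtype.ext (h1.symm.trans h2)))
      (fun w => measurableSet_singleton _)
    rw [hU] at h
    exact h
  -- the one-step balance equation
  have hbal : ∀ q : E × E, ∑' p : E × E, α {p} * kfun f β p q = α {q} := by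
    intro q
    have hm : (⨆ k : ℤ, ⨆ _ : k ≤ (0 : ℤ), MeasurableSpace.comap (Z k) inferInstance)
        ≤ (inferInstance : MeasurableSpace Ω) :=
      iSup₂_le fun k _ => (hZmeas k).comap_le
    have hs : MeasurableSet {ω | Z (0 + 1) ω = q} := by
      have : {ω | Z (0 + 1) ω = q} = Z (0 + 1) ⁻¹' {q} := rfl
      rw [this]
      exact (hZmeas _) (measurableSet_singleton q)
    have hint : Integrable (Set.indicator {ω | Z (0 + 1) ω = q} fun _ => (1 : ℝ)) P :=
      (integrable_const (1 : ℝ)).indicator hs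
    have h2 : ∫ ω, ((Measure.map (fun v => (f (Z 0 ω).1 v, f (Z 0 ω).2 v)) β) {q}).toReal ∂P
        = ∫ ω, (Set.indicator {ω | Z (0 + 1) ω = q} fun _ => (1 : ℝ)) ω ∂P := by
      rw [← integral_congr_ae (hMarkov 0 q)]
      exact integral_condExp hm
    -- rewrite the right-hand side
    have hrhs : ∫ ω, (Set.indicator {ω | Z (0 + 1) ω = q} fun _ => (1 : ℝ)) ω ∂P
        = (α {q}).toReal := by
      rw [integral_indicator_const (1 : ℝ) hs]
      have : P {ω | Z (0 + 1) ω = q} = α {q} := by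
        have hpre : {ω | Z (0 + 1) ω = q} = Z (0 + 1) ⁻¹' {q} := rfl
        rw [hpre, ← Measure.map_apply (hZmeas _) (measurableSet_singleton q), hstat]
      rw [measureReal_def, this]
      simp
    -- rewrite the left-hand side as a kernel expression
    have hker : ∀ ω, (Measure.map (fun v => (f (Z 0 ω).1 v, f (Z 0 ω).2 v)) β) {q}
        = kfun f β (Z 0 ω) q := by
      intro ω
      rw [Measure.map_apply ((hf _).prodMk (hf _)) (measurableSet_singleton q)]
      rfl
    have hfin : ∀ p : E × E, kfun f β p q < ⊤ := fun p => measure_lt_top β _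
    have hlhs : ∫ ω, ((Measure.map (fun v => (f (Z 0 ω).1 v, f (Z 0 ω).2 v)) β) {q}).toReal ∂P
        = (∫⁻ ω, kfun f β (Z 0 ω) q ∂P).toReal := by
      have heq : (fun ω => ((Measure.map (fun v => (f (Z 0 ω).1 v, f (Z 0 ω).2 v)) β) {q}).toReal)
          = fun ω => (kfun f β (Z 0 ω) q).toReal := by
        funext ω; rw [hker ω]
      rw [heq]
      exact integral_toReal
        (((measurable_of_countable (fun p => kfun f β p q)).comp (hZmeas 0)).aemeasurable)
        (Filter.Eventually.of_forall fun ω => hfin _)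
    have hlint : ∫⁻ ω, kfun f β (Z 0 ω) q ∂P = ∑' p : E × E, α {p} * kfun f β p q := by
      have heq : (fun ω => kfun f β (Z 0 ω) q) = fun ω => ∑' p : E × E,
          Set.indicator (Z 0 ⁻¹' {p}) (fun _ => kfun f β p q) ω := by
        funext ω
        rw [tsum_eq_single (Z 0 ω) (fun p hp => by
          rw [Set.indicator_of_notMem]
          simp only [Set.mem_preimage, Set.mem_singleton_iff]
          exact fun hc => hp hc.symm)]
        rw [Set.indicator_of_mem (by simp : ω ∈ Z 0 ⁻¹' {Z 0 ω})]
      rw [heq, lintegral_tsum (fun p => (measurable_const.indicator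
        ((hZmeas 0) (measurableSet_singleton p))).aemeasurable)]
      congr 1; ext p
      rw [lintegral_indicator_const ((hZmeas 0) (measurableSet_singleton p)),
        ← Measure.map_apply (hZmeas 0) (measurableSet_singleton p), hstat, mul_comm]
    -- total mass finiteness of the sum
    have hsumfin : ∑' p : E × E, α {p} * kfun f β p q ≠ ⊤ := by
      have hle : ∑' p : E × E, α {p} * kfun f β p q ≤ ∑' p : E × E, α {p} := by
        refine ENNReal.tsum_le_tsum fun p => ?_
        calc α {p} * kfun f β p q ≤ α {p} * 1 := by
              exact mul_le_mul_right (by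
                have : kfun f β p q ≤ β Set.univ := measure_mono (Set.subset_univ _)
                simpa using this) _
          _ = α {p} := mul_one _
      have : ∑' p : E × E, α ({p} : Set (E × E)) = α Set.univ :=
        ((hsingU Set.univ MeasurableSet.univ).trans (tsum_univ fun p => α {p})).symm
      rw [this, hαuniv] at hle
      exact (lt_of_le_of_lt hle (by norm_num)).ne
    -- put everything together
    have := h2.trans hrhs
    rw [hlhs, hlint] at this
    exact (ENNReal.toReal_eq_toReal_iff' hsumfin (measure_lt_top α _).ne).mp this
  -- invariance for the iterated kernel
  have hinv : ∀ (l : ℕ) (q : E × E), ∑' p : E × E, α {p} * Kit f β l p q = α {q} := by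
    intro l
    induction l with
    | zero =>
      intro q
      simp only [Kit]
      rw [tsum_eq_single q (fun p hp => by rw [if_neg (fun h => hp h.symm), mul_zero])]
      simp
    | succ l ih =>
      intro q
      simp only [Kit]
      calc ∑' p : E × E, α {p} * ∑' r : E × E, kfun f β p r * Kit f β l r q
          = ∑' p : E × E, ∑' r : E × E, α {p} * kfun f β p r * Kit f β l r q := by
            congr 1; ext p
            rw [← ENNReal.tsum_mul_left]
            congr 1; ext r; ring
        _ = ∑' r : E × E, ∑' p : E × E, α {p} * kfun f β p r * Kit f β l r q :=
            ENNReal.tsum_comm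
        _ = ∑' r : E × E, (∑' p : E × E, α {p} * kfun f β p r) * Kit f β l r q := by
            congr 1; ext r; rw [ENNReal.tsum_mul_right]
        _ = ∑' r : E × E, α {r} * Kit f β l r q := by
            congr 1; ext r; rw [hbal r]
        _ = α {q} := ih q
  -- main claim : α Dᶜ = 0
  have hDc : α Dᶜ = 0 := by
    by_contra hpos
    -- find an atom off the diagonal
    have hq₀ : ∃ q₀ : E × E, q₀ ∈ Dᶜ ∧ α {q₀} ≠ 0 := by
      by_contra hno
      push_neg at hno
      apply hpos
      rw [hsingU Dᶜ hDmeas.compl]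
      refine ENNReal.tsum_eq_zero.2 fun w => ?_
      exact hno w w.2
    obtain ⟨q₀, hq₀D, hq₀α⟩ := hq₀
    obtain ⟨l, -, hpi⟩ := hacc q₀.1 q₀.2
    -- translate accordability into the iterated kernel
    have hz : ∃ z : E, Kit f β l q₀ (z, z) ≠ 0 := by
      by_contra hno
      push_neg at hno
      have hsub : {v : Fin l → G | (List.ofFn v).foldl f q₀.1 = (List.ofFn v).foldl f q₀.2}
          ⊆ ⋃ z : E, {v : Fin l → G |
            ((List.ofFn v).foldl f q₀.1, (List.ofFn v).foldl f q₀.2) = (z, z)} := by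
        intro v hv
        simp only [Set.mem_setOf_eq] at hv
        exact Set.mem_iUnion.2 ⟨(List.ofFn v).foldl f q₀.2, by
          rw [Set.mem_setOf_eq, hv]⟩
      have hle := (measure_mono hsub).trans
        (measure_iUnion_le (μ := Measure.pi fun _ : Fin l => β) _)
      have : ∀ z : E, (Measure.pi fun _ : Fin l => β) {v : Fin l → G |
          ((List.ofFn v).foldl f q₀.1, (List.ofFn v).foldl f q₀.2) = (z, z)} = 0 := by
        intro z
        rw [pi_foldl_eq hf l (q₀.1, q₀.2) (z, z)]
        exact hno z
      rw [ENNReal.tsum_eq_zero.2 this] at hle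
      exact absurd (le_antisymm hle zero_le) (ne_of_gt hpi)
    obtain ⟨z, hz⟩ := hz
    -- the "escape mass" from p in l steps
    set c : E × E → ℝ≥0∞ := fun p => ∑' w : ↥Dᶜ, Kit f β l p (w : E × E) with hc
    have hcD : ∀ p : E × E, p ∈ D → c p = 0 := by
      intro p hp
      refine ENNReal.tsum_eq_zero.2 fun w => ?_
      exact Kdiag hf l p w hp w.2
    have hcle : ∀ p, c p ≤ 1 := by
      intro p
      calc c p ≤ ∑' q : E × E, Kit f β l p q :=
            ENNReal.tsum_comp_le_tsum_of_injective Subtype.coe_injective _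
        _ = 1 := Ksum hf l p
    have hckey : c q₀ + Kit f β l q₀ (z, z) ≤ 1 := by
      have hzD : ((z, z) : E × E) ∉ Dᶜ := by simp [hD]
      have hle : ∀ q : E × E, Set.indicator Dᶜ (Kit f β l q₀) q
          + Set.indicator {((z, z) : E × E)} (Kit f β l q₀) q ≤ Kit f β l q₀ q := by
        intro q
        by_cases hq : q ∈ Dᶜ
        · rw [Set.indicator_of_mem hq, Set.indicator_of_notMem (by
            simp only [Set.mem_singleton_iff]
            rintro rfl
            exact hzD hq), add_zero]
        · rw [Set.indicator_of_notMem hq, zero_add]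
          exact Set.indicator_le_self _ _ q
      calc c q₀ + Kit f β l q₀ (z, z)
          = (∑' q : E × E, Set.indicator Dᶜ (Kit f β l q₀) q)
            + ∑' q : E × E, Set.indicator {((z, z) : E × E)} (Kit f β l q₀) q := by
            congr 1
            · exact tsum_subtype Dᶜ (Kit f β l q₀)
            · rw [tsum_eq_single ((z, z) : E × E) (fun q hq =>
                Set.indicator_of_notMem (by simpa using hq) _)]
              simp
        _ = ∑' q : E × E, (Set.indicator Dᶜ (Kit f β l q₀) q
            + Set.indicator {((z, z) : E × E)} (Kit f β l q₀) q) := ENNReal.tsum_add.symm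
        _ ≤ ∑' q : E × E, Kit f β l q₀ q := ENNReal.tsum_le_tsum hle
        _ = 1 := Ksum hf l q₀
    -- two expressions for α Dᶜ
    have hexp : α Dᶜ = ∑' p : E × E, α {p} * c p := by
      rw [hsingU Dᶜ hDmeas.compl]
      calc ∑' w : ↥Dᶜ, α {(w : E × E)}
          = ∑' w : ↥Dᶜ, ∑' p : E × E, α {p} * Kit f β l p (w : E × E) := by
            congr 1; ext w; rw [hinv l]
        _ = ∑' p : E × E, ∑' w : ↥Dᶜ, α {p} * Kit f β l p (w : E × E) := ENNReal.tsum_comm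
        _ = ∑' p : E × E, α {p} * c p := by
            congr 1; ext p; rw [hc, ENNReal.tsum_mul_left]
    -- key inequality
    have hkey : α Dᶜ + α {q₀} * Kit f β l q₀ (z, z) ≤ α Dᶜ := by
      conv_rhs => rw [hsingU Dᶜ hDmeas.compl, tsum_subtype Dᶜ (fun p => α {p})]
      rw [hexp]
      calc (∑' p : E × E, α {p} * c p) + α {q₀} * Kit f β l q₀ (z, z)
          = (∑' p : E × E, α {p} * c p)
            + ∑' p : E × E, (if p = q₀ then α {q₀} * Kit f β l q₀ (z, z) else 0) := by
            rw [tsum_ite_eq q₀ (fun _ => α {q₀} * Kit f β l q₀ (z, z))]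
        _ = ∑' p : E × E, (α {p} * c p
            + if p = q₀ then α {q₀} * Kit f β l q₀ (z, z) else 0) := ENNReal.tsum_add.symm
        _ ≤ ∑' p : E × E, Set.indicator Dᶜ (fun p => α {p}) p := by
            refine ENNReal.tsum_le_tsum fun p => ?_
            by_cases hpq : p = q₀
            · subst hpq
              rw [if_pos rfl, Set.indicator_of_mem hq₀D, ← mul_add]
              calc α {p} * (c p + Kit f β l p (z, z)) ≤ α {p} * 1 :=
                    mul_le_mul_right hckey _
                _ = α {p} := mul_one _
            · rw [if_neg hpq, add_zero]
              by_cases hp : p ∈ Dᶜ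
              · rw [Set.indicator_of_mem hp]
                calc α {p} * c p ≤ α {p} * 1 := mul_le_mul_right (hcle p) _
                  _ = α {p} := mul_one _
              · rw [Set.indicator_of_notMem hp, hcD p (by simpa using hp), mul_zero]
    -- conclude
    have hDcfin : α Dᶜ ≠ ⊤ := (measure_lt_top α _).ne
    have hzero : α {q₀} * Kit f β l q₀ (z, z) = 0 := by
      have hcan := ENNReal.cancel_of_ne hDcfin
      have h0 : α Dᶜ + α {q₀} * Kit f β l q₀ (z, z) ≤ α Dᶜ + 0 := by
        rwa [add_zero]
      exact le_antisymm (hcan h0) zero_le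
    rcases mul_eq_zero.1 hzero with h | h
    · exact hq₀α h
    · exact hz h
  -- finish
  intro n
  have hgoal : {ω | (Z n ω).1 = (Z n ω).2} = Z n ⁻¹' D := rfl
  rw [hgoal, ← Measure.map_apply (hZmeas n) hDmeas, hstat n]
  have := measure_add_measure_compl (μ := α) hDmeas
  rw [hDc, add_zero, hαuniv] at this
  exact this
end

section
/- Let $E$ be a finite set, $H\subset E^E$ a set of maps, and $S$ the semigroup generated by $H$ under composition. Call $x,y\in E$ accordable if there exists $s\in S$ with $s(x)=s(y)$. Let $M$ be the maximum cardinality of a subset of $E$ whose elements are pairwise non-accordable. If $r\in S$ satisfies $\mathrm{Card}\,r(E)=\min_{s\in S}\mathrm{Card}\,s(E)$, then $r(E)$ consists of exactly $M$ pairwise non-accordable points. -/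
/-- Membership in the sub-semigroup of `E → E` generated by `H` under composition. -/
inductive InSemigroup {E : Type*} (H : Set (E → E)) : (E → E) → Prop
  | base : ∀ h ∈ H, InSemigroup H h
  | comp : ∀ s t : E → E, InSemigroup H s → InSemigroup H t → InSemigroup H (s ∘ t)

/-- Two states are accordable if some element of the generated semigroup merges them. -/
def Accordable {E : Type*} (H : Set (E → E)) (x y : E) : Prop :=
  ∃ s : E → E, InSemigroup H s ∧ s x = s y

/-- if `r` belongs to the semigroup `S` generated by `H` and the cardinality
of its image is minimal among elements of `S`, then `r(E)` consists of exactly `M`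
pairwise non-accordable points, where `M` is the maximal cardinality of a set of
pairwise non-accordable states. -/
theorem stmt_9 {E : Type*} [Fintype E] [DecidableEq E] [Nonempty E]
    (H : Set (E → E)) (M : ℕ)
    (hM : IsGreatest {m : ℕ | ∃ A : Finset E, A.card = m ∧
        ∀ x ∈ A, ∀ y ∈ A, x ≠ y → ¬ Accordable H x y} M)
    (r : E → E) (hr : InSemigroup H r)
    (hmin : ∀ s : E → E, InSemigroup H s →
      (Finset.univ.image r).card ≤ (Finset.univ.image s).card) :
    (Finset.univ.image r).card = M ∧
      ∀ x ∈ Finset.univ.image r, ∀ y ∈ Finset.univ.image r, x ≠ y →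
        ¬ Accordable H x y := by
  have key : ∀ x ∈ Finset.univ.image r, ∀ y ∈ Finset.univ.image r, x ≠ y →
      ¬ Accordable H x y := by
    rintro x hx y hy hxy ⟨s, hs, hsxy⟩
    have hcomp : InSemigroup H (s ∘ r) := InSemigroup.comp s r hs hr
    have h1 : Finset.univ.image (s ∘ r) = (Finset.univ.image r).image s :=
      (Finset.image_image).symm
    have hlt : (Finset.univ.image (s ∘ r)).card < (Finset.univ.image r).card := by
      rw [h1]
      refine lt_of_le_of_ne Finset.card_image_le ?_
      intro heq
      exact hxy (Finset.injOn_of_card_image_eq heq hx hy hsxy)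
    exact absurd (hmin _ hcomp) (not_le.2 hlt)
  refine ⟨le_antisymm ?_ ?_, key⟩
  · exact hM.2 ⟨Finset.univ.image r, rfl, key⟩
  · obtain ⟨A, hA, hpair⟩ := hM.1
    have hinj : Set.InjOn r A := by
      intro x hx y hy hxy
      by_contra hne
      exact hpair x hx y hy hne ⟨r, hr, hxy⟩
    calc M = A.card := hA.symm
      _ = (A.image r).card := (Finset.card_image_of_injOn hinj).symm
      _ ≤ (Finset.univ.image r).card := Finset.card_le_card (by
          intro a ha
          simp only [Finset.mem_image] at *
          obtain ⟨x, _, hx⟩ := ha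
          exact ⟨x, Finset.mem_univ x, hx⟩)
end

section
/- Let $E$ be finite and $(T_n)_{n\in\mathbf{N}}$ the left random walk on the semigroup $S\subset E^E$ defined by $T_0=\mathrm{id}$ and $T_n = f_{V_0}\circ\cdots\circ f_{V_{-n+1}}$ with i.i.d. $V_k$. If $r\in S$ is a recurrent state for $(T_n)$, then for every $s\in S$ accessible from the identity, $\mathrm{Card}\,r(E)\le\mathrm{Card}\,s(E)$; in particular $\mathrm{Card}\,r(E)=\min_{s\in S}\mathrm{Card}\,s(E)$. -/
/-- `t` is accessible from `r` for the left random walk on the semigroup generated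
by `H`: either `t = r` or `t = u ∘ r` for some `u` in the semigroup. -/
def Accessible {E : Type*} (H : Set (E → E)) (r t : E → E) : Prop :=
  t = r ∨ ∃ u : E → E, InSemigroup H u ∧ t = u ∘ r


lemma card_image_comp_le_left {E : Type*} [Fintype E] [DecidableEq E] (a b : E → E) :
    (Finset.univ.image (a ∘ b)).card ≤ (Finset.univ.image a).card := by
  apply Finset.card_le_card
  intro x hx
  simp only [Finset.mem_image, Finset.mem_univ, true_and] at *
  obtain ⟨y, hy⟩ := hx
  exact ⟨b y, hy⟩

lemma card_image_comp_le_right {E : Type*} [Fintype E] [DecidableEq E] (a b : E → E) :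
    (Finset.univ.image (a ∘ b)).card ≤ (Finset.univ.image b).card := by
  have h : Finset.univ.image (a ∘ b) = (Finset.univ.image b).image a := by
    ext x; simp [Function.comp]
  rw [h]
  exact Finset.card_image_le

/-- if `r` is a recurrent state of the left random walk `(T_n)` on the
semigroup generated by `H` (i.e. whenever `t` is accessible from `r`, then `r` is
accessible from `t`), then `Card r(E) ≤ Card s(E)` for every `s` in the semigroup
(every such `s` being accessible from the identity); in particular `Card r(E)`
is the minimum of `Card s(E)` over the semigroup. -/
theorem stmt_10 {E : Type*} [Fintype E] [DecidableEq E] [Nonempty E]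
    (H : Set (E → E)) (r : E → E) (hr : InSemigroup H r)
    (hrec : ∀ t : E → E, Accessible H r t → Accessible H t r) :
    (∀ s : E → E, InSemigroup H s → Accessible H id s →
        (Finset.univ.image r).card ≤ (Finset.univ.image s).card) ∧
      IsLeast {m : ℕ | ∃ s : E → E, InSemigroup H s ∧ (Finset.univ.image s).card = m}
        (Finset.univ.image r).card := by
  have key : ∀ s : E → E, InSemigroup H s →
      (Finset.univ.image r).card ≤ (Finset.univ.image s).card := by
    intro s hs
    have hacc : Accessible H r (s ∘ r) := Or.inr ⟨s, hs, rfl⟩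
    rcases hrec _ hacc with h | ⟨u, _, h⟩
    · calc (Finset.univ.image r).card = (Finset.univ.image (s ∘ r)).card := by conv_lhs => rw [h]
        _ ≤ _ := card_image_comp_le_left s r
    · calc (Finset.univ.image r).card = (Finset.univ.image (u ∘ (s ∘ r))).card := by conv_lhs => rw [h]
        _ ≤ (Finset.univ.image (s ∘ r)).card := card_image_comp_le_right _ _
        _ ≤ _ := card_image_comp_le_left s r
  refine ⟨fun s hs _ => key s hs, ⟨r, hr, rfl⟩, ?_⟩
  rintro m ⟨s, hs, rfl⟩
  exact key s hs
end

section
/- Let $E$ be a finite set, $H\subset E^E$, $S$ the semigroup generated by $H$, and suppose there is a probability $\alpha$ on $H$ with $\sum_{h\in H}\alpha(h)\,\mathrm{Card}\,h^{-1}\{y\}=1$ for every $y\in E$. Call states simultaneously accordable if some $s\in S$ maps them all to one point, and let $N$ be the maximal number of simultaneously accordable states. If $F\subset E$ has $N$ simultaneously accordable elements, then for every $h\in H$ with $\alpha(h)>0$, the preimage $h^{-1}(F)$ also has exactly $N$ elements, and these are simultaneously accordable. -/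
/-- A finite set of states is simultaneously accordable if some element of the
generated semigroup maps all of them to a single point. -/
def SimultAccordable {E : Type*} (H : Set (E → E)) (A : Finset E) : Prop :=
  ∃ s : E → E, InSemigroup H s ∧ ∃ c : E, ∀ x ∈ A, s x = c

/-- assume the uniform measure on the finite set `E` is invariant, i.e.
`∑ h ∈ H, α h * Card h⁻¹{y} = 1` for every `y`, where `α` is a probability on `H`
charging every point of `H`. If `F ⊆ E` consists of `N` simultaneously accordable
elements (`N` being the maximal number of simultaneously accordable states), then for
every `h ∈ H` the preimage `h⁻¹(F)` also has exactly `N` elements, and these are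
simultaneously accordable. -/
theorem stmt_11 {E : Type*} [Fintype E] [DecidableEq E] [Nonempty E]
    (H : Finset (E → E)) (α : (E → E) → ℝ)
    (hα_pos : ∀ h ∈ H, 0 < α h) (hα_sum : ∑ h ∈ H, α h = 1)
    (hinv : ∀ y : E, ∑ h ∈ H, α h * ((Finset.univ.filter fun x => h x = y).card : ℝ) = 1)
    (N : ℕ)
    (hN : IsGreatest {m : ℕ | ∃ A : Finset E, A.card = m ∧ SimultAccordable (↑H) A} N)
    (F : Finset E) (hF : F.card = N) (hFacc : SimultAccordable (↑H) F) :
    ∀ h ∈ H, (Finset.univ.filter fun x => h x ∈ F).card = N ∧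
      SimultAccordable (↑H) (Finset.univ.filter fun x => h x ∈ F) := by
  obtain ⟨s, hs, c, hc⟩ := hFacc
  -- preimages are accordable
  have hacc : ∀ h ∈ H, SimultAccordable (↑H) (Finset.univ.filter fun x => h x ∈ F) := by
    intro h hh
    exact ⟨s ∘ h, InSemigroup.comp s h hs (InSemigroup.base h (by exact_mod_cast hh)),
      c, fun x hx => hc (h x) (by simpa using hx)⟩
  -- card of each preimage ≤ N
  have hle : ∀ h ∈ H, (Finset.univ.filter fun x => h x ∈ F).card ≤ N := by
    intro h hh
    exact hN.2 ⟨_, rfl, hacc h hh⟩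
  -- fiberwise count
  have hfib : ∀ h : E → E, ((Finset.univ.filter fun x => h x ∈ F).card : ℝ) =
      ∑ y ∈ F, ((Finset.univ.filter fun x => h x = y).card : ℝ) := by
    intro h
    have := Finset.card_eq_sum_card_fiberwise
      (f := h) (s := Finset.univ.filter fun x => h x ∈ F) (t := F)
      (fun x hx => (Finset.mem_filter.mp hx).2)
    rw [this]
    push_cast
    refine Finset.sum_congr rfl fun y hy => ?_
    have heq : ((Finset.univ.filter fun x => h x ∈ F).filter fun x => h x = y)
        = Finset.univ.filter fun x => h x = y := by
      ext x
      simp only [Finset.mem_filter, Finset.mem_univ, true_and]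
      exact ⟨fun ⟨_, e⟩ => e, fun e => ⟨e ▸ hy, e⟩⟩
    rw [heq]
  -- total sum equals N
  have hsum : ∑ h ∈ H, α h * ((Finset.univ.filter fun x => h x ∈ F).card : ℝ) = N := by
    calc ∑ h ∈ H, α h * ((Finset.univ.filter fun x => h x ∈ F).card : ℝ)
        = ∑ h ∈ H, ∑ y ∈ F, α h * ((Finset.univ.filter fun x => h x = y).card : ℝ) := by
          refine Finset.sum_congr rfl fun h _ => ?_
          rw [hfib h, Finset.mul_sum]
      _ = ∑ y ∈ F, ∑ h ∈ H, α h * ((Finset.univ.filter fun x => h x = y).card : ℝ) :=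
          Finset.sum_comm
      _ = ∑ y ∈ F, (1 : ℝ) := Finset.sum_congr rfl fun y _ => hinv y
      _ = N := by simp [hF]
  -- deduce each card = N
  have hzero : ∑ h ∈ H, α h * ((N : ℝ) - ((Finset.univ.filter fun x => h x ∈ F).card : ℝ)) = 0 := by
    simp only [mul_sub]
    rw [Finset.sum_sub_distrib, hsum, ← Finset.sum_mul, hα_sum, one_mul, sub_self]
  have hnonneg : ∀ h ∈ H, 0 ≤ α h * ((N : ℝ) - ((Finset.univ.filter fun x => h x ∈ F).card : ℝ)) := by
    intro h hh
    have := hle h hh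
    have : ((Finset.univ.filter fun x => h x ∈ F).card : ℝ) ≤ N := by exact_mod_cast this
    exact mul_nonneg (hα_pos h hh).le (by linarith)
  intro h hh
  have heach := (Finset.sum_eq_zero_iff_of_nonneg hnonneg).mp hzero h hh
  have : ((N : ℝ) - ((Finset.univ.filter fun x => h x ∈ F).card : ℝ)) = 0 := by
    rcases mul_eq_zero.mp heach with h1 | h2
    · exact absurd h1 (hα_pos h hh).ne'
    · exact h2
  refine ⟨by exact_mod_cast sub_eq_zero.mp this |>.symm, hacc h hh⟩
end

section
/- Let $E$ be finite, $S\subset E^E$ a composition semigroup, and $N$ the maximal number of simultaneously accordable states. Let $F_1,\dots,F_k$ be pairwise disjoint subsets of $E$, each with $N$ simultaneously accordable elements, and $s\in S$ constant on each $F_i$ with value $c_i$. Then the points $c_1,\dots,c_k$ are pairwise non-accordable; in particular $k\le M$, the maximal number of pairwise non-accordable states. -/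
/-- if `F 1, …, F k` are pairwise disjoint subsets of `E`, each consisting
of `N` simultaneously accordable elements (`N` being the maximal number of simultaneously
accordable states), and `s` in the semigroup is constant on each `F i` with value `c i`,
then the points `c 1, …, c k` are pairwise non-accordable; in particular `k ≤ M`, the
maximal number of pairwise non-accordable states. -/
theorem stmt_13 {E : Type*} [Fintype E] [DecidableEq E] [Nonempty E]
    (H : Set (E → E)) (N M : ℕ)
    (hN : IsGreatest {m : ℕ | ∃ A : Finset E, A.card = m ∧ SimultAccordable H A} N)
    (hM : IsGreatest {m : ℕ | ∃ A : Finset E, A.card = m ∧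
        ∀ x ∈ A, ∀ y ∈ A, x ≠ y → ¬ Accordable H x y} M)
    (k : ℕ) (F : Fin k → Finset E)
    (hdisj : ∀ i j : Fin k, i ≠ j → Disjoint (F i) (F j))
    (hcard : ∀ i, (F i).card = N) (hacc : ∀ i, SimultAccordable H (F i))
    (s : E → E) (hs : InSemigroup H s)
    (c : Fin k → E) (hc : ∀ i, ∀ x ∈ F i, s x = c i) :
    (∀ i j : Fin k, i ≠ j → ¬ Accordable H (c i) (c j)) ∧ k ≤ M := by
  have key : ∀ i j : Fin k, i ≠ j → ¬ Accordable H (c i) (c j) := by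
    intro i j hij ⟨t, ht, htc⟩
    -- t ∘ s merges F i ∪ F j
    have hsim : SimultAccordable H (F i ∪ F j) := by
      refine ⟨t ∘ s, InSemigroup.comp _ _ ht hs, t (c i), ?_⟩
      intro x hx
      rcases Finset.mem_union.mp hx with h | h
      · simp [Function.comp, hc i x h]
      · simp [Function.comp, hc j x h, htc]
    have h2N : 2 * N ≤ N := by
      have hcardu : (F i ∪ F j).card = 2 * N := by
        rw [Finset.card_union_of_disjoint (hdisj i j hij), hcard, hcard]; ring
      exact hN.2 ⟨F i ∪ F j, hcardu, hsim⟩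
    have hN0 : N = 0 := by omega
    have h1N : 1 ≤ N :=
      hN.2 ⟨{c i}, Finset.card_singleton _, t, ht, t (c i), by simp⟩
    omega
  refine ⟨key, ?_⟩
  have hinj : Function.Injective c := by
    intro i j hij
    by_contra hne
    exact key i j hne ⟨s, hs, by rw [hij]⟩
  have : (Finset.univ.image c).card = k := by
    rw [Finset.card_image_of_injective _ hinj, Finset.card_univ, Fintype.card_fin]
  refine hM.2 ⟨Finset.univ.image c, this, ?_⟩
  intro x hx y hy hxy
  obtain ⟨i, _, rfl⟩ := Finset.mem_image.mp hx
  obtain ⟨j, _, rfl⟩ := Finset.mem_image.mp hy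
  exact key i j (fun h => hxy (by rw [h]))
end
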